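/- arXiv:1912.10697 — 4 statements merged into one kernel-verified Lean document; each statement's English description precedes it below -/
import Mathlib

section
/- The Q-function satisfies the dynamic programming principle: for every (x, u, t) ∈ ℝ^n × ℝ^m × [0,T] and every h > 0 with t + h ≤ T, Q(x, u, t) = inf over admissible u ∈ 𝕌₁ with x(t) = x, u(t) = u of [ ∫_t^{t+h} r(x(s), u(s)) ds + Q(x(t+h), u(t+h), t+h) ]. -/
open MeasureTheory Set

noncomputable section

/-- Carathéodory solution of `ẋ(s) = f(x(s), u(s))` on `[t, T]`:
`x s = x t + ∫_t^s f(x(τ), u(τ)) dτ` (with the integrand interval integrable). -/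
def IsTrajectory {n m : ℕ}
    (f : EuclideanSpace ℝ (Fin n) → EuclideanSpace ℝ (Fin m) → EuclideanSpace ℝ (Fin n))
    (t T : ℝ) (x : ℝ → EuclideanSpace ℝ (Fin n)) (u : ℝ → EuclideanSpace ℝ (Fin m)) : Prop :=
  ∀ s ∈ Set.Icc t T,
    IntervalIntegrable (fun τ => f (x τ) (u τ)) MeasureTheory.volume t s ∧
      x s = x t + ∫ τ in t..s, f (x τ) (u τ)

/-- The total cost `∫_t^T r(x(s), u(s)) ds + q(x(T))`. -/
def cost {n m : ℕ}
    (r : EuclideanSpace ℝ (Fin n) → EuclideanSpace ℝ (Fin m) → ℝ)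
    (q : EuclideanSpace ℝ (Fin n) → ℝ) (t T : ℝ)
    (x : ℝ → EuclideanSpace ℝ (Fin n)) (u : ℝ → EuclideanSpace ℝ (Fin m)) : ℝ :=
  (∫ s in t..T, r (x s) (u s)) + q (x T)

/-- Admissible controls `𝕌₁`: Lipschitz continuous on `[0, T]` with
Lipschitz constant (equivalently, `‖u̇‖_{L^∞}` bound) `M`. -/
def Adm {m : ℕ} (M T : ℝ) (u : ℝ → EuclideanSpace ℝ (Fin m)) : Prop :=
  LipschitzOnWith (Real.toNNReal M) u (Set.Icc 0 T)

/-- The Q-function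
`Q(x₀,u₀,t) = inf { ∫_t^T r(x(s),u(s)) ds + q(x(T)) : u ∈ 𝕌₁, x(t) = x₀, u(t) = u₀ }`. -/
def Qfun {n m : ℕ}
    (f : EuclideanSpace ℝ (Fin n) → EuclideanSpace ℝ (Fin m) → EuclideanSpace ℝ (Fin n))
    (r : EuclideanSpace ℝ (Fin n) → EuclideanSpace ℝ (Fin m) → ℝ)
    (q : EuclideanSpace ℝ (Fin n) → ℝ) (M T : ℝ)
    (x₀ : EuclideanSpace ℝ (Fin n)) (u₀ : EuclideanSpace ℝ (Fin m)) (t : ℝ) : ℝ :=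
  sInf { c : ℝ | ∃ x u, Adm M T u ∧ IsTrajectory f t T x u ∧
      x t = x₀ ∧ u t = u₀ ∧ c = cost r q t T x u }

lemma traj_exists {n m : ℕ}
    (f : EuclideanSpace ℝ (Fin n) → EuclideanSpace ℝ (Fin m) → EuclideanSpace ℝ (Fin n))
    {M T Cf : ℝ} {Kf : NNReal}
    (hfb : ∀ x u, ‖f x u‖ ≤ Cf)
    (hfl : LipschitzWith Kf (fun p : EuclideanSpace ℝ (Fin n) × EuclideanSpace ℝ (Fin m) => f p.1 p.2))
    (t₀ : ℝ) (ht₀ : t₀ ≤ T)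
    (x₀ : EuclideanSpace ℝ (Fin n)) (u₀ : EuclideanSpace ℝ (Fin m)) :
    ∃ x u, Adm M T u ∧ IsTrajectory f t₀ T x u ∧ x t₀ = x₀ ∧ u t₀ = u₀ := by
  have hCf : 0 ≤ Cf := le_trans (norm_nonneg _) (hfb x₀ u₀)
  have hflu : LipschitzWith Kf (fun y : EuclideanSpace ℝ (Fin n) => f y u₀) := by
    have := hfl.comp (LipschitzWith.prodMk_right u₀)
    simp only [mul_one] at this; exact this
  set R : ℝ := Cf * max (T - t₀) (t₀ - t₀) with hR
  have hpl : IsPicardLindelof (fun _ y => f y u₀) (⟨t₀, le_refl t₀, ht₀⟩ : Icc t₀ T) x₀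
      ⟨R, mul_nonneg hCf (le_trans (by norm_num) (le_max_right _ _))⟩ 0 ⟨Cf, hCf⟩ Kf :=
    { lipschitzOnWith := fun t _ => hflu.lipschitzOnWith
      continuousOn := fun x _ => continuousOn_const
      norm_le := fun t _ y _ => hfb y u₀
      mul_max_le := by
        show Cf * max (T - t₀) (t₀ - t₀) ≤ R - 0
        rw [sub_zero] }
  obtain ⟨χ, hχ0, hχd⟩ := hpl.exists_eq_forall_mem_Icc_hasDerivWithinAt₀
  have hχc : ContinuousOn χ (Icc t₀ T) := fun s hs => (hχd s hs).continuousWithinAt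
  have hgc : ContinuousOn (fun τ => f (χ τ) u₀) (Icc t₀ T) :=
    hflu.continuous.comp_continuousOn hχc
  refine ⟨χ, fun _ => u₀, ?_, ?_, hχ0, rfl⟩
  · intro a _ b _
    simp
  · intro s hs
    have hsub : Icc t₀ s ⊆ Icc t₀ T := Icc_subset_Icc le_rfl hs.2
    have hint : IntervalIntegrable (fun τ => f (χ τ) u₀) volume t₀ s :=
      (hgc.mono (by rw [uIcc_of_le hs.1]; exact hsub)).intervalIntegrable
    refine ⟨hint, ?_⟩
    have := intervalIntegral.integral_eq_sub_of_hasDeriv_right_of_le hs.1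
      (hχc.mono hsub)
      (fun τ hτ => ?_) hint
    · rw [this]; abel
    · have hτT : τ ∈ Ioo t₀ T := ⟨hτ.1, lt_of_lt_of_le hτ.2 hs.2⟩
      exact ((hχd τ (Ioo_subset_Icc_self hτT)).hasDerivAt
        (Icc_mem_nhds hτT.1 hτT.2)).hasDerivWithinAt

lemma traj_continuousOn {n m : ℕ}
    {f : EuclideanSpace ℝ (Fin n) → EuclideanSpace ℝ (Fin m) → EuclideanSpace ℝ (Fin n)}
    {t T : ℝ} {x : ℝ → EuclideanSpace ℝ (Fin n)} {u : ℝ → EuclideanSpace ℝ (Fin m)}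
    (hx : IsTrajectory f t T x u) (htT : t ≤ T) : ContinuousOn x (Icc t T) := by
  have hint : IntegrableOn (fun τ => f (x τ) (u τ)) (uIcc t T) volume := by
    rw [uIcc_of_le htT, ← intervalIntegrable_iff_integrableOn_Icc_of_le htT]
    exact (hx T ⟨htT, le_rfl⟩).1
  have hc : ContinuousOn (fun s => x t + ∫ τ in t..s, f (x τ) (u τ)) (Icc t T) := by
    have := (continuousOn_const (c := x t)).add
      (intervalIntegral.continuousOn_primitive_interval hint)
    rwa [uIcc_of_le htT] at this
  refine hc.congr fun s hs => ?_
  exact (hx s hs).2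

lemma traj_restrict {n m : ℕ}
    {f : EuclideanSpace ℝ (Fin n) → EuclideanSpace ℝ (Fin m) → EuclideanSpace ℝ (Fin n)}
    {t T a : ℝ} {x : ℝ → EuclideanSpace ℝ (Fin n)} {u : ℝ → EuclideanSpace ℝ (Fin m)}
    (hx : IsTrajectory f t T x u) (ha : a ∈ Icc t T) : IsTrajectory f a T x u := by
  intro s hs
  have hsT : s ∈ Icc t T := ⟨le_trans ha.1 hs.1, hs.2⟩
  have i1 := (hx s hsT).1
  have i2 := (hx a ha).1
  have i3 : IntervalIntegrable (fun τ => f (x τ) (u τ)) volume a s := i2.symm.trans i1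
  refine ⟨i3, ?_⟩
  have hsplit := intervalIntegral.integral_add_adjacent_intervals i2 i3
  have e1 := (hx s hsT).2
  have e2 := (hx a ha).2
  rw [← hsplit] at e1
  rw [e1, e2]; abel

lemma cost_lb {n m : ℕ}
    {r : EuclideanSpace ℝ (Fin n) → EuclideanSpace ℝ (Fin m) → ℝ}
    {q : EuclideanSpace ℝ (Fin n) → ℝ} {Cr Cq : ℝ}
    (hrb : ∀ x u, |r x u| ≤ Cr) (hqb : ∀ x, |q x| ≤ Cq)
    {t T : ℝ} (ht0 : 0 ≤ t) (htT : t ≤ T)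
    (x : ℝ → EuclideanSpace ℝ (Fin n)) (u : ℝ → EuclideanSpace ℝ (Fin m)) :
    -(Cr * T + Cq) ≤ cost r q t T x u := by
  have hCr : 0 ≤ Cr := le_trans (abs_nonneg _) (hrb (x 0) (u 0))
  have h1 : ‖∫ s in t..T, r (x s) (u s)‖ ≤ Cr * |T - t| :=
    intervalIntegral.norm_integral_le_of_norm_le_const fun s _ => hrb (x s) (u s)
  rw [Real.norm_eq_abs] at h1
  have h2 : Cr * |T - t| ≤ Cr * T := by
    rw [abs_of_nonneg (by linarith)]
    exact mul_le_mul_of_nonneg_left (by linarith) hCr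
  have h3 := abs_le.1 (hqb (x T))
  have h4 := abs_le.1 h1
  unfold cost
  nlinarith [h4.1, h3.1]

lemma pair_contOn {n m : ℕ}
    {f : EuclideanSpace ℝ (Fin n) → EuclideanSpace ℝ (Fin m) → EuclideanSpace ℝ (Fin n)}
    {r : EuclideanSpace ℝ (Fin n) → EuclideanSpace ℝ (Fin m) → ℝ} {Kr : NNReal}
    (hrl : LipschitzWith Kr (fun p : EuclideanSpace ℝ (Fin n) × EuclideanSpace ℝ (Fin m) => r p.1 p.2))
    {M t T : ℝ} {x : ℝ → EuclideanSpace ℝ (Fin n)} {u : ℝ → EuclideanSpace ℝ (Fin m)}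
    (hx : IsTrajectory f t T x u) (hu : Adm M T u) (ht0 : 0 ≤ t) (htT : t ≤ T) :
    ContinuousOn (fun s => r (x s) (u s)) (Icc t T) := by
  have hux : ContinuousOn u (Icc t T) :=
    (hu.continuousOn).mono (Icc_subset_Icc ht0 le_rfl)
  exact hrl.continuous.comp_continuousOn ((traj_continuousOn hx htT).prodMk hux)

lemma cost_split {n m : ℕ}
    {f : EuclideanSpace ℝ (Fin n) → EuclideanSpace ℝ (Fin m) → EuclideanSpace ℝ (Fin n)}
    {r : EuclideanSpace ℝ (Fin n) → EuclideanSpace ℝ (Fin m) → ℝ}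
    {q : EuclideanSpace ℝ (Fin n) → ℝ} {Kr : NNReal}
    (hrl : LipschitzWith Kr (fun p : EuclideanSpace ℝ (Fin n) × EuclideanSpace ℝ (Fin m) => r p.1 p.2))
    {M t T a : ℝ} {x : ℝ → EuclideanSpace ℝ (Fin n)} {u : ℝ → EuclideanSpace ℝ (Fin m)}
    (hx : IsTrajectory f t T x u) (hu : Adm M T u) (ht0 : 0 ≤ t) (hta : t ≤ a) (haT : a ≤ T) :
    cost r q t T x u = (∫ s in t..a, r (x s) (u s)) + cost r q a T x u := by
  have hc := pair_contOn hrl hx hu ht0 (le_trans hta haT)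
  have i1 : IntervalIntegrable (fun s => r (x s) (u s)) volume t a :=
    (hc.mono (by rw [uIcc_of_le hta]; exact Icc_subset_Icc le_rfl haT)).intervalIntegrable
  have i2 : IntervalIntegrable (fun s => r (x s) (u s)) volume a T :=
    (hc.mono (by rw [uIcc_of_le haT]; exact Icc_subset_Icc hta le_rfl)).intervalIntegrable
  unfold cost
  rw [← intervalIntegral.integral_add_adjacent_intervals i1 i2]
  ring

section Concat

variable {n m : ℕ}
    {f : EuclideanSpace ℝ (Fin n) → EuclideanSpace ℝ (Fin m) → EuclideanSpace ℝ (Fin n)}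
    {r : EuclideanSpace ℝ (Fin n) → EuclideanSpace ℝ (Fin m) → ℝ}
    {q : EuclideanSpace ℝ (Fin n) → ℝ} {Kr : NNReal}
    {M t T a : ℝ}
    {x1 x2 : ℝ → EuclideanSpace ℝ (Fin n)} {u1 u2 : ℝ → EuclideanSpace ℝ (Fin m)}

lemma concat_all
    (hrl : LipschitzWith Kr (fun p : EuclideanSpace ℝ (Fin n) × EuclideanSpace ℝ (Fin m) => r p.1 p.2))
    (hM : 0 < M)
    (hu1 : Adm M T u1) (hx1 : IsTrajectory f t T x1 u1)
    (hu2 : Adm M T u2) (hx2 : IsTrajectory f a T x2 u2)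
    (hxa : x2 a = x1 a) (hua : u2 a = u1 a)
    (ht0 : 0 ≤ t) (hta : t ≤ a) (haT : a ≤ T) :
    ∃ X U, Adm M T U ∧ IsTrajectory f t T X U ∧ X t = x1 t ∧ U t = u1 t ∧
      cost r q t T X U = (∫ s in t..a, r (x1 s) (u1 s)) + cost r q a T x2 u2 := by
  classical
  set X : ℝ → EuclideanSpace ℝ (Fin n) := fun s => if s ≤ a then x1 s else x2 s with hX
  set U : ℝ → EuclideanSpace ℝ (Fin m) := fun s => if s ≤ a then u1 s else u2 s with hU
  have hXlo : ∀ s, s ≤ a → X s = x1 s := fun s hs => if_pos hs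
  have hUlo : ∀ s, s ≤ a → U s = u1 s := fun s hs => if_pos hs
  have hXhi : ∀ s, a ≤ s → X s = x2 s := by
    intro s hs
    by_cases hs' : s ≤ a
    · have : s = a := le_antisymm hs' hs
      simp [X, this, hxa]
    · exact if_neg hs'
  have hUhi : ∀ s, a ≤ s → U s = u2 s := by
    intro s hs
    by_cases hs' : s ≤ a
    · have : s = a := le_antisymm hs' hs
      simp [U, this, hua]
    · exact if_neg hs'
  have ha0 : 0 ≤ a := le_trans ht0 hta
  have htT : t ≤ T := le_trans hta haT
  -- integrand congruences
  have hfint1 : ∀ s, t ≤ s → s ≤ a →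
      (Set.EqOn (fun τ => f (X τ) (U τ)) (fun τ => f (x1 τ) (u1 τ)) (uIcc t s)) := by
    intro s hts hsa τ hτ
    rw [uIcc_of_le hts] at hτ
    have : τ ≤ a := le_trans hτ.2 hsa
    simp only [hXlo τ this, hUlo τ this]
  have hfint2 : ∀ s, a ≤ s →
      (Set.EqOn (fun τ => f (X τ) (U τ)) (fun τ => f (x2 τ) (u2 τ)) (uIcc a s)) := by
    intro s has τ hτ
    rw [uIcc_of_le has] at hτ
    simp only [hXhi τ hτ.1, hUhi τ hτ.1]
  have key1 : ∀ s, t ≤ s → s ≤ a →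
      IntervalIntegrable (fun τ => f (X τ) (U τ)) volume t s ∧
        X s = X t + ∫ τ in t..s, f (X τ) (U τ) := by
    intro s hts hsa
    have hsT : s ∈ Icc t T := ⟨hts, le_trans hsa haT⟩
    have hint : IntervalIntegrable (fun τ => f (X τ) (U τ)) volume t s := by
      refine ((hx1 s hsT).1).congr_ae ?_
      exact ((ae_restrict_mem measurableSet_uIoc).mono
        (fun τ hτ => ((hfint1 s hts hsa) (uIoc_subset_uIcc hτ)).symm))
    refine ⟨hint, ?_⟩
    rw [hXlo s hsa, hXlo t hta, intervalIntegral.integral_congr (hfint1 s hts hsa)]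
    exact (hx1 s hsT).2
  have key2 : ∀ s, a ≤ s → s ≤ T →
      IntervalIntegrable (fun τ => f (X τ) (U τ)) volume a s ∧
        X s = X a + ∫ τ in a..s, f (X τ) (U τ) := by
    intro s has hsT
    have hint : IntervalIntegrable (fun τ => f (X τ) (U τ)) volume a s := by
      refine ((hx2 s ⟨has, hsT⟩).1).congr_ae ?_
      exact ((ae_restrict_mem measurableSet_uIoc).mono
        (fun τ hτ => ((hfint2 s has) (uIoc_subset_uIcc hτ)).symm))
    refine ⟨hint, ?_⟩
    rw [hXhi s has, hXhi a le_rfl, intervalIntegral.integral_congr (hfint2 s has)]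
    exact (hx2 s ⟨has, hsT⟩).2
  have hXtraj : IsTrajectory f t T X U := by
    intro s hs
    by_cases hsa : s ≤ a
    · exact key1 s hs.1 hsa
    · push_neg at hsa
      have k1 := key1 a hta le_rfl
      have k2 := key2 s hsa.le hs.2
      refine ⟨k1.1.trans k2.1, ?_⟩
      rw [← intervalIntegral.integral_add_adjacent_intervals k1.1 k2.1, k2.2, k1.2]
      abel
  have hUadm : Adm M T U := by
    have hMc : (Real.toNNReal M : ℝ) = M := Real.coe_toNNReal M hM.le
    have key : ∀ p ∈ Icc (0:ℝ) T, ∀ s ∈ Icc (0:ℝ) T, p ≤ s →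
        dist (U p) (U s) ≤ M * dist p s := by
      intro p hp s hs hps
      have hdist : dist p s = s - p := by
        rw [Real.dist_eq, abs_of_nonpos (by linarith)]; ring
      by_cases hsa : s ≤ a
      · rw [hUlo p (le_trans hps hsa), hUlo s hsa]
        have := hu1.dist_le_mul p hp s hs
        rwa [hMc] at this
      · push_neg at hsa
        by_cases hpa : p ≤ a
        · rw [hUlo p hpa, hU]
          simp only [not_le.2 hsa, if_false]
          have haI : a ∈ Icc (0:ℝ) T := ⟨ha0, haT⟩
          calc dist (u1 p) (u2 s) ≤ dist (u1 p) (u1 a) + dist (u1 a) (u2 s) := dist_triangle _ _ _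
            _ ≤ M * dist p a + dist (u2 a) (u2 s) := by rw [hua]; gcongr; exact (hMc ▸ hu1.dist_le_mul p hp a haI)
            _ ≤ M * dist p a + M * dist a s := by gcongr; exact (hMc ▸ hu2.dist_le_mul a haI s hs)
            _ ≤ M * dist p s := by
                rw [Real.dist_eq, Real.dist_eq, Real.dist_eq,
                  abs_of_nonpos (by linarith), abs_of_nonpos (by linarith),
                  abs_of_nonpos (by linarith)]
                ring_nf
                nlinarith
        · push_neg at hpa
          rw [hUhi p hpa.le, hUhi s hsa.le]
          have := hu2.dist_le_mul p hp s hs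
          rwa [hMc] at this
    have : LipschitzOnWith (Real.toNNReal M) U (Icc 0 T) := by
      apply LipschitzOnWith.of_dist_le'
      intro p hp s hs
      rcases le_total p s with hps | hps
      · exact key p hp s hs hps
      · rw [dist_comm (U p), dist_comm p]
        exact key s hs p hp hps
    exact this
  refine ⟨X, U, hUadm, hXtraj, hXlo t hta, hUlo t hta, ?_⟩
  -- cost identity
  have hc1 : ContinuousOn (fun s => r (x1 s) (u1 s)) (Icc t T) :=
    pair_contOn hrl hx1 hu1 ht0 htT
  have hc2 : ContinuousOn (fun s => r (x2 s) (u2 s)) (Icc a T) :=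
    pair_contOn hrl hx2 hu2 ha0 haT
  have i1 : IntervalIntegrable (fun s => r (x1 s) (u1 s)) volume t a :=
    (hc1.mono (by rw [uIcc_of_le hta]; exact Icc_subset_Icc le_rfl haT)).intervalIntegrable
  have i2 : IntervalIntegrable (fun s => r (x2 s) (u2 s)) volume a T :=
    (hc2.mono (by rw [uIcc_of_le haT])).intervalIntegrable
  have e1 : Set.EqOn (fun s => r (X s) (U s)) (fun s => r (x1 s) (u1 s)) (uIcc t a) := by
    intro τ hτ
    rw [uIcc_of_le hta] at hτ
    simp only [hXlo τ hτ.2, hUlo τ hτ.2]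
  have e2 : Set.EqOn (fun s => r (X s) (U s)) (fun s => r (x2 s) (u2 s)) (uIcc a T) := by
    intro τ hτ
    rw [uIcc_of_le haT] at hτ
    simp only [hXhi τ hτ.1, hUhi τ hτ.1]
  have j1 : IntervalIntegrable (fun s => r (X s) (U s)) volume t a :=
    i1.congr_ae ((ae_restrict_mem measurableSet_uIoc).mono
      (fun τ hτ => (e1 (uIoc_subset_uIcc hτ)).symm))
  have j2 : IntervalIntegrable (fun s => r (X s) (U s)) volume a T :=
    i2.congr_ae ((ae_restrict_mem measurableSet_uIoc).mono
      (fun τ hτ => (e2 (uIoc_subset_uIcc hτ)).symm))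
  unfold cost
  rw [← intervalIntegral.integral_add_adjacent_intervals j1 j2,
    intervalIntegral.integral_congr e1, intervalIntegral.integral_congr e2,
    hXhi T haT]
  ring

end Concat

/-- **Dynamic programming principle** for the Q-function: for every `(x₀, u₀, t)` and every
`h > 0` with `t + h ≤ T`,
`Q(x₀,u₀,t) = inf { ∫_t^{t+h} r(x(s),u(s)) ds + Q(x(t+h), u(t+h), t+h) : u ∈ 𝕌₁, x(t)=x₀, u(t)=u₀ }`. -/
theorem dynamic_programming_principle {n m : ℕ}
    (f : EuclideanSpace ℝ (Fin n) → EuclideanSpace ℝ (Fin m) → EuclideanSpace ℝ (Fin n))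
    (r : EuclideanSpace ℝ (Fin n) → EuclideanSpace ℝ (Fin m) → ℝ)
    (q : EuclideanSpace ℝ (Fin n) → ℝ) (M T : ℝ) (hM : 0 < M)
    (Cf Cr Cq : ℝ)
    (hfb : ∀ x u, ‖f x u‖ ≤ Cf) (hrb : ∀ x u, |r x u| ≤ Cr) (hqb : ∀ x, |q x| ≤ Cq)
    (Kf Kr Kq : NNReal)
    (hfl : LipschitzWith Kf (fun p : EuclideanSpace ℝ (Fin n) × EuclideanSpace ℝ (Fin m) => f p.1 p.2))
    (hrl : LipschitzWith Kr (fun p : EuclideanSpace ℝ (Fin n) × EuclideanSpace ℝ (Fin m) => r p.1 p.2))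
    (hql : LipschitzWith Kq q)
    (x₀ : EuclideanSpace ℝ (Fin n)) (u₀ : EuclideanSpace ℝ (Fin m))
    (t : ℝ) (ht : t ∈ Set.Icc 0 T) (h : ℝ) (hh : 0 < h) (hth : t + h ≤ T) :
    Qfun f r q M T x₀ u₀ t =
      sInf { c : ℝ | ∃ x u, Adm M T u ∧ IsTrajectory f t T x u ∧
          x t = x₀ ∧ u t = u₀ ∧
          c = (∫ s in t..(t + h), r (x s) (u s)) +
              Qfun f r q M T (x (t + h)) (u (t + h)) (t + h) } := by
  have hta : t ≤ t + h := by linarith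
  have htT : t ≤ T := le_trans hta hth
  have ht0 : 0 ≤ t := ht.1
  have ha0 : (0:ℝ) ≤ t + h := by linarith
  -- the generic cost sets
  set SA : EuclideanSpace ℝ (Fin n) → EuclideanSpace ℝ (Fin m) → ℝ → Set ℝ :=
    fun y v s => { c : ℝ | ∃ x u, Adm M T u ∧ IsTrajectory f s T x u ∧
      x s = y ∧ u s = v ∧ c = cost r q s T x u } with hSA
  have hQdef : ∀ y v s, Qfun f r q M T y v s = sInf (SA y v s) := fun _ _ _ => rfl
  have hne : ∀ y v (s : ℝ), s ≤ T → (SA y v s).Nonempty := by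
    intro y v s hsT
    obtain ⟨x, u, hAdm, htraj, hx, hu⟩ := traj_exists f (M := M) hfb hfl s hsT y v
    exact ⟨cost r q s T x u, x, u, hAdm, htraj, hx, hu, rfl⟩
  have hbdd : ∀ y v (s : ℝ), 0 ≤ s → s ≤ T → BddBelow (SA y v s) := by
    intro y v s hs0 hsT
    refine ⟨-(Cr * T + Cq), fun c hc => ?_⟩
    obtain ⟨x, u, _, _, _, _, hcc⟩ := hc
    rw [hcc]
    exact cost_lb hrb hqb hs0 hsT x u
  -- the RHS set
  set S' : Set ℝ := { c : ℝ | ∃ x u, Adm M T u ∧ IsTrajectory f t T x u ∧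
      x t = x₀ ∧ u t = u₀ ∧
      c = (∫ s in t..(t + h), r (x s) (u s)) +
          Qfun f r q M T (x (t + h)) (u (t + h)) (t + h) } with hS'
  have hS'ne : S'.Nonempty := by
    obtain ⟨x, u, hAdm, htraj, hx, hu⟩ := traj_exists f (M := M) hfb hfl t htT x₀ u₀
    exact ⟨_, x, u, hAdm, htraj, hx, hu, rfl⟩
  rw [hQdef]
  apply le_antisymm
  · -- sInf SA ≤ sInf S'
    refine le_csInf hS'ne ?_
    rintro c' ⟨x1, u1, hu1, hx1, hx1t, hu1t, hc'⟩
    refine le_of_forall_pos_le_add ?_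
    intro ε hε
    obtain ⟨c2, hc2mem, hc2lt⟩ :=
      Real.lt_sInf_add_pos (hne (x1 (t + h)) (u1 (t + h)) (t + h) hth) hε
    obtain ⟨x2, u2, hu2, hx2, hx2a, hu2a, hc2⟩ := hc2mem
    obtain ⟨X, U, hUA, hXT, hXt, hUt, hcost⟩ :=
      concat_all hrl hM hu1 hx1 hu2 hx2 hx2a hu2a ht0 hta hth
    have hmem : cost r q t T X U ∈ SA x₀ u₀ t :=
      ⟨X, U, hUA, hXT, hXt.trans hx1t, hUt.trans hu1t, rfl⟩
    calc sInf (SA x₀ u₀ t) ≤ cost r q t T X U := csInf_le (hbdd x₀ u₀ t ht0 htT) hmem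
      _ = (∫ s in t..(t + h), r (x1 s) (u1 s)) + c2 := by rw [hcost, hc2]
      _ ≤ c' + ε := by
          rw [hc', hQdef]
          linarith [hc2lt]
  · -- sInf S' ≤ sInf SA
    refine le_csInf (hne x₀ u₀ t htT) ?_
    rintro c ⟨x, u, hu, hx, hxt, hut, hc⟩
    have hsplit := cost_split (q := q) hrl hx hu ht0 hta hth
    have hrest : IsTrajectory f (t + h) T x u := traj_restrict hx ⟨hta, hth⟩
    have hmem2 : cost r q (t + h) T x u ∈ SA (x (t + h)) (u (t + h)) (t + h) :=
      ⟨x, u, hu, hrest, rfl, rfl, rfl⟩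
    have hQ2 : Qfun f r q M T (x (t + h)) (u (t + h)) (t + h) ≤ cost r q (t + h) T x u := by
      rw [hQdef]
      exact csInf_le (hbdd _ _ _ ha0 hth) hmem2
    have hmem' : (∫ s in t..(t + h), r (x s) (u s)) +
        Qfun f r q M T (x (t + h)) (u (t + h)) (t + h) ∈ S' :=
      ⟨x, u, hu, hx, hxt, hut, rfl⟩
    calc sInf S' ≤ (∫ s in t..(t + h), r (x s) (u s)) +
          Qfun f r q M T (x (t + h)) (u (t + h)) (t + h) := by
          refine csInf_le ?_ hmem'
          refine ⟨-(Cr * T) + -(Cr * T + Cq), ?_⟩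
          rintro c'' ⟨x', u', hu', hx', _, _, hc''⟩
          have hQlb : -(Cr * T + Cq) ≤ Qfun f r q M T (x' (t + h)) (u' (t + h)) (t + h) := by
            rw [hQdef]
            refine le_csInf (hne _ _ _ hth) ?_
            rintro d ⟨x3, u3, _, _, _, _, hd⟩
            rw [hd]
            exact cost_lb hrb hqb ha0 hth x3 u3
          have hCr : 0 ≤ Cr := le_trans (abs_nonneg _) (hrb x₀ u₀)
          have hIb : ‖∫ s in t..(t + h), r (x' s) (u' s)‖ ≤ Cr * |t + h - t| :=
            intervalIntegral.norm_integral_le_of_norm_le_const fun s _ => hrb (x' s) (u' s)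
          rw [Real.norm_eq_abs] at hIb
          have : |t + h - t| ≤ T := by
            rw [abs_of_nonneg (by linarith)]
            linarith
          have h2 : Cr * |t + h - t| ≤ Cr * T := mul_le_mul_of_nonneg_left this hCr
          have h3 := (abs_le.1 hIb).1
          rw [hc'']
          linarith
      _ ≤ c := by rw [hc, hsplit]; linarith [hQ2]


end
end

section
/- An admissible control u ∈ 𝕌₁ with associated Carathéodory trajectory x, x(t) = x, u(t) = u, is optimal for the cost ∫_t^T r(x(s), u(s)) ds + q(x(T)) (i.e., attains the infimum defining Q(x, u, t)) if and only if the function s ↦ g_u(s; x, u, t) := ∫_t^s r(x(τ), u(τ)) dτ + Q(x(s), u(s), s) is non-increasing on [t, T]; equivalently, if and only if g_u(·; x, u, t) is constant on [t, T]. -/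
open MeasureTheory Set

noncomputable section

namespace QProof

variable {n m : ℕ}

/-- The set whose infimum defines `Qfun`. -/
def QSet (f : EuclideanSpace ℝ (Fin n) → EuclideanSpace ℝ (Fin m) → EuclideanSpace ℝ (Fin n))
    (r : EuclideanSpace ℝ (Fin n) → EuclideanSpace ℝ (Fin m) → ℝ)
    (q : EuclideanSpace ℝ (Fin n) → ℝ) (M T : ℝ)
    (x₀ : EuclideanSpace ℝ (Fin n)) (u₀ : EuclideanSpace ℝ (Fin m)) (t : ℝ) : Set ℝ :=
  { c : ℝ | ∃ x u, Adm M T u ∧ IsTrajectory f t T x u ∧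
      x t = x₀ ∧ u t = u₀ ∧ c = cost r q t T x u }

lemma Qfun_eq_sInf (f : EuclideanSpace ℝ (Fin n) → EuclideanSpace ℝ (Fin m) → EuclideanSpace ℝ (Fin n))
    (r : EuclideanSpace ℝ (Fin n) → EuclideanSpace ℝ (Fin m) → ℝ)
    (q : EuclideanSpace ℝ (Fin n) → ℝ) (M T : ℝ)
    (x₀ : EuclideanSpace ℝ (Fin n)) (u₀ : EuclideanSpace ℝ (Fin m)) (t : ℝ) :
    Qfun f r q M T x₀ u₀ t = sInf (QSet f r q M T x₀ u₀ t) := rfl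

lemma QSet_bddBelow {f : EuclideanSpace ℝ (Fin n) → EuclideanSpace ℝ (Fin m) → EuclideanSpace ℝ (Fin n)}
    {r : EuclideanSpace ℝ (Fin n) → EuclideanSpace ℝ (Fin m) → ℝ}
    {q : EuclideanSpace ℝ (Fin n) → ℝ} {M T Cr Cq : ℝ}
    (hrb : ∀ x u, |r x u| ≤ Cr) (hqb : ∀ x, |q x| ≤ Cq)
    (x₀ : EuclideanSpace ℝ (Fin n)) (u₀ : EuclideanSpace ℝ (Fin m)) (t : ℝ) :
    BddBelow (QSet f r q M T x₀ u₀ t) := by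
  refine ⟨-(Cr * |T - t| + Cq), ?_⟩
  rintro c ⟨x, u, -, -, -, -, rfl⟩
  have h1 : ‖∫ s in t..T, r (x s) (u s)‖ ≤ Cr * |T - t| :=
    intervalIntegral.norm_integral_le_of_norm_le_const fun τ _ => by
      simpa [Real.norm_eq_abs] using hrb (x τ) (u τ)
  rw [Real.norm_eq_abs] at h1
  have h2 := hqb (x T)
  rw [abs_le] at h1 h2
  simp only [cost]
  linarith [h1.1, h2.1]

/-- A trajectory on `[t,T]` restricts to a trajectory on `[s₁,T]`. -/
lemma traj_sub {f : EuclideanSpace ℝ (Fin n) → EuclideanSpace ℝ (Fin m) → EuclideanSpace ℝ (Fin n)}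
    {t T : ℝ} {x : ℝ → EuclideanSpace ℝ (Fin n)} {u : ℝ → EuclideanSpace ℝ (Fin m)}
    (hx : IsTrajectory f t T x u) {s₁ : ℝ} (hs₁ : s₁ ∈ Set.Icc t T) :
    IsTrajectory f s₁ T x u := by
  intro s hs
  have h1 := hx s₁ hs₁
  have h2 := hx s ⟨hs₁.1.trans hs.1, hs.2⟩
  have hint : IntervalIntegrable (fun τ => f (x τ) (u τ)) volume s₁ s :=
    h1.1.symm.trans h2.1
  refine ⟨hint, ?_⟩
  have hadd := intervalIntegral.integral_add_adjacent_intervals h1.1 hint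
  rw [h2.2, h1.2, ← hadd, add_assoc]

/-- A trajectory is continuous on `[t,T]`. -/
lemma traj_cont {f : EuclideanSpace ℝ (Fin n) → EuclideanSpace ℝ (Fin m) → EuclideanSpace ℝ (Fin n)}
    {t T : ℝ} {x : ℝ → EuclideanSpace ℝ (Fin n)} {u : ℝ → EuclideanSpace ℝ (Fin m)}
    (hx : IsTrajectory f t T x u) (htT : t ≤ T) :
    ContinuousOn x (Set.Icc t T) := by
  have hint := (hx T ⟨htT, le_refl T⟩).1
  have hcont : ContinuousOn (fun s => x t + ∫ τ in t..s, f (x τ) (u τ)) (Set.Icc t T) := by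
    apply continuousOn_const.add
    have := intervalIntegral.continuousOn_primitive_interval'
      (f := fun τ => f (x τ) (u τ)) (μ := volume) (a := t) hint left_mem_uIcc
    rwa [Set.uIcc_of_le htT] at this
  exact hcont.congr fun s hs => (hx s hs).2

lemma rcomp_cont {r : EuclideanSpace ℝ (Fin n) → EuclideanSpace ℝ (Fin m) → ℝ} {Kr : NNReal}
    (hrl : LipschitzWith Kr (fun p : EuclideanSpace ℝ (Fin n) × EuclideanSpace ℝ (Fin m) => r p.1 p.2))
    {x : ℝ → EuclideanSpace ℝ (Fin n)} {u : ℝ → EuclideanSpace ℝ (Fin m)} {s : Set ℝ}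
    (hxc : ContinuousOn x s) (huc : ContinuousOn u s) :
    ContinuousOn (fun τ => r (x τ) (u τ)) s := by
  have := hrl.continuous.comp_continuousOn (hxc.prodMk huc)
  exact this

/-- Gluing two `K`-Lipschitz functions agreeing at the splitting point. -/
lemma lip_glue {K : NNReal} {u u' : ℝ → EuclideanSpace ℝ (Fin m)} {a b c : ℝ}
    (hc : c ∈ Set.Icc a b)
    (hu : LipschitzOnWith K u (Set.Icc a b)) (hu' : LipschitzOnWith K u' (Set.Icc a b))
    (heq : u c = u' c) :
    LipschitzOnWith K (fun τ => if τ ≤ c then u τ else u' τ) (Set.Icc a b) := by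
  rw [lipschitzOnWith_iff_dist_le_mul] at hu hu' ⊢
  intro p hp s hs
  have key : ∀ p' s', p' ∈ Set.Icc a b → s' ∈ Set.Icc a b → p' ≤ c → ¬ s' ≤ c →
      dist (if p' ≤ c then u p' else u' p') (if s' ≤ c then u s' else u' s') ≤ K * dist p' s' := by
    intro p' s' hp' hs' h1 h2
    rw [if_pos h1, if_neg h2]
    push_neg at h2
    calc dist (u p') (u' s') ≤ dist (u p') (u c) + dist (u' c) (u' s') := by
          rw [heq] at *; exact dist_triangle _ _ _
      _ ≤ K * dist p' c + K * dist c s' := add_le_add (hu p' hp' c hc) (hu' c hc s' hs')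
      _ ≤ K * dist p' s' := by
          rw [Real.dist_eq, Real.dist_eq, Real.dist_eq,
            abs_of_nonpos (by linarith), abs_of_nonpos (by linarith),
            abs_of_nonpos (by linarith)]
          nlinarith [K.2]
  by_cases h1 : p ≤ c <;> by_cases h2 : s ≤ c
  · simp only [if_pos h1, if_pos h2]; exact hu p hp s hs
  · exact key p s hp hs h1 h2
  · rw [dist_comm (if p ≤ c then u p else u' p), dist_comm p s]
    exact key s p hs hp h2 h1
  · simp only [if_neg h1, if_neg h2]; exact hu' p hp s hs

end QProof


namespace QProof

lemma intervalIntegrable_congr' {E : Type*} [NormedAddCommGroup E] {g h : ℝ → E} {a b : ℝ}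
    (heq : Set.EqOn h g (Set.uIoc a b)) (hh : IntervalIntegrable h volume a b) :
    IntervalIntegrable g volume a b := by
  rw [intervalIntegrable_iff] at *
  exact hh.congr_fun heq measurableSet_uIoc

variable {n m : ℕ}
  {f : EuclideanSpace ℝ (Fin n) → EuclideanSpace ℝ (Fin m) → EuclideanSpace ℝ (Fin n)}
  {r : EuclideanSpace ℝ (Fin n) → EuclideanSpace ℝ (Fin m) → ℝ}
  {q : EuclideanSpace ℝ (Fin n) → ℝ} {M T Cr Cq : ℝ} {Kr : NNReal}

/-- The Q-function at terminal time equals the terminal cost. -/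
lemma Qfun_at_T (hrb : ∀ x u, |r x u| ≤ Cr) (hqb : ∀ x, |q x| ≤ Cq)
    (x₀ : EuclideanSpace ℝ (Fin n)) (u₀ : EuclideanSpace ℝ (Fin m)) :
    Qfun f r q M T x₀ u₀ T = q x₀ := by
  have hconst : Adm M T (fun _ : ℝ => u₀) := by
    rw [Adm, lipschitzOnWith_iff_dist_le_mul]
    intro p _ s _
    simp only [dist_self]
    positivity
  have htraj : IsTrajectory f T T (fun _ => x₀) (fun _ => u₀) := by
    intro s hs
    obtain rfl : s = T := le_antisymm hs.2 hs.1
    exact ⟨IntervalIntegrable.refl, by simp⟩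
  have hmem : q x₀ ∈ QSet f r q M T x₀ u₀ T :=
    ⟨fun _ => x₀, fun _ => u₀, hconst, htraj, rfl, rfl, by simp [cost]⟩
  rw [Qfun_eq_sInf]
  apply le_antisymm
  · exact csInf_le (QSet_bddBelow hrb hqb _ _ _) hmem
  · apply le_csInf ⟨q x₀, hmem⟩
    rintro c ⟨x, u, -, -, hxT, -, rfl⟩
    simp [cost, hxT]

/-- Dynamic programming monotonicity: the running cost plus value is monotone along
any admissible trajectory. -/
lemma Q_mono (hrb : ∀ x u, |r x u| ≤ Cr) (hqb : ∀ x, |q x| ≤ Cq)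
    (hrl : LipschitzWith Kr (fun p : EuclideanSpace ℝ (Fin n) × EuclideanSpace ℝ (Fin m) => r p.1 p.2))
    {x : ℝ → EuclideanSpace ℝ (Fin n)} {u : ℝ → EuclideanSpace ℝ (Fin m)} {t : ℝ}
    (h0t : 0 ≤ t) (hu : Adm M T u) (hx : IsTrajectory f t T x u)
    {s₁ s₂ : ℝ} (hts : t ≤ s₁) (h12 : s₁ ≤ s₂) (h2T : s₂ ≤ T) :
    Qfun f r q M T (x s₁) (u s₁) s₁ ≤
      (∫ τ in s₁..s₂, r (x τ) (u τ)) + Qfun f r q M T (x s₂) (u s₂) s₂ := by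
  have h1mem : s₁ ∈ Set.Icc t T := ⟨hts, h12.trans h2T⟩
  have h2mem : s₂ ∈ Set.Icc t T := ⟨hts.trans h12, h2T⟩
  have h0s₂ : (0 : ℝ) ≤ s₂ := h0t.trans h2mem.1
  have htT : t ≤ T := hts.trans (h12.trans h2T)
  have hsub : Set.Icc t T ⊆ Set.Icc 0 T := Set.Icc_subset_Icc h0t le_rfl
  have hxc : ContinuousOn x (Set.Icc t T) := traj_cont hx htT
  have huc : ContinuousOn u (Set.Icc 0 T) := hu.continuousOn
  have hrc : ContinuousOn (fun τ => r (x τ) (u τ)) (Set.Icc t T) :=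
    rcomp_cont hrl hxc (huc.mono hsub)
  have hrint : IntervalIntegrable (fun τ => r (x τ) (u τ)) volume s₁ s₂ := by
    apply (hrc.mono ?_).intervalIntegrable
    rw [Set.uIcc_of_le h12]
    exact Set.Icc_subset_Icc h1mem.1 h2mem.2
  -- key step: for any competitor from (x s₂, u s₂, s₂), concatenation gives an element
  -- of the set at (x s₁, u s₁, s₁)
  have key : ∀ c ∈ QSet f r q M T (x s₂) (u s₂) s₂,
      Qfun f r q M T (x s₁) (u s₁) s₁ ≤ (∫ τ in s₁..s₂, r (x τ) (u τ)) + c := by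
    rintro c ⟨x', u', hu', hx', hx's, hu's, rfl⟩
    set xt : ℝ → EuclideanSpace ℝ (Fin n) := fun τ => if τ ≤ s₂ then x τ else x' τ with hxt
    set ut : ℝ → EuclideanSpace ℝ (Fin m) := fun τ => if τ ≤ s₂ then u τ else u' τ with hut
    have hx'c : ContinuousOn x' (Set.Icc s₂ T) := traj_cont hx' h2T
    have hu'c : ContinuousOn u' (Set.Icc 0 T) := hu'.continuousOn
    have hr'c : ContinuousOn (fun τ => r (x' τ) (u' τ)) (Set.Icc s₂ T) :=
      rcomp_cont hrl hx'c (hu'c.mono (Set.Icc_subset_Icc h0s₂ le_rfl))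
    have hAdm : Adm M T ut := lip_glue ⟨h0s₂, h2T⟩ hu hu' hu's.symm
    have hxsub := traj_sub hx h1mem
    -- the concatenated trajectory
    have hTraj : IsTrajectory f s₁ T xt ut := by
      intro σ hσ
      by_cases hσ2 : σ ≤ s₂
      · have hEq : Set.EqOn (fun τ => f (x τ) (u τ)) (fun τ => f (xt τ) (ut τ))
            (Set.uIcc s₁ σ) := by
          intro τ hτ
          rw [Set.uIcc_of_le hσ.1] at hτ
          have hτ2 : τ ≤ s₂ := hτ.2.trans hσ2
          simp only [hxt, hut, if_pos hτ2]
        have hbase := hxsub σ ⟨hσ.1, hσ.2⟩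
        refine ⟨intervalIntegrable_congr' (fun τ hτ => hEq (Set.uIoc_subset_uIcc hτ)) hbase.1, ?_⟩
        have : xt σ = x σ := if_pos hσ2
        have h1 : xt s₁ = x s₁ := if_pos h12
        rw [this, h1, ← intervalIntegral.integral_congr hEq]
        exact hbase.2
      · push_neg at hσ2
        have hEq1 : Set.EqOn (fun τ => f (x τ) (u τ)) (fun τ => f (xt τ) (ut τ))
            (Set.uIcc s₁ s₂) := by
          intro τ hτ
          rw [Set.uIcc_of_le h12] at hτ
          simp only [hxt, hut, if_pos hτ.2]
        have hEq2 : Set.EqOn (fun τ => f (x' τ) (u' τ)) (fun τ => f (xt τ) (ut τ))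
            (Set.uIcc s₂ σ) := by
          intro τ hτ
          rw [Set.uIcc_of_le hσ2.le] at hτ
          rcases eq_or_lt_of_le hτ.1 with h | h
          · simp only [hxt, hut, ← h, if_pos le_rfl, hx's, hu's]
          · simp only [hxt, hut, if_neg (not_le.2 h)]
        have hb1 := hxsub s₂ ⟨h12, h2T⟩
        have hb2 := hx' σ ⟨hσ2.le, hσ.2⟩
        have i1 : IntervalIntegrable (fun τ => f (xt τ) (ut τ)) volume s₁ s₂ :=
          intervalIntegrable_congr' (fun τ hτ => hEq1 (Set.uIoc_subset_uIcc hτ)) hb1.1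
        have i2 : IntervalIntegrable (fun τ => f (xt τ) (ut τ)) volume s₂ σ :=
          intervalIntegrable_congr' (fun τ hτ => hEq2 (Set.uIoc_subset_uIcc hτ)) hb2.1
        refine ⟨i1.trans i2, ?_⟩
        have hadd := intervalIntegral.integral_add_adjacent_intervals i1 i2
        have e1 : xt σ = x' σ := if_neg (not_le.2 hσ2)
        have e2 : xt s₁ = x s₁ := if_pos h12
        rw [e1, e2, hb2.2, hx's, hb1.2, ← hadd,
          ← intervalIntegral.integral_congr hEq1, ← intervalIntegral.integral_congr hEq2,
          add_assoc]
    have hmem : cost r q s₁ T xt ut ∈ QSet f r q M T (x s₁) (u s₁) s₁ :=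
      ⟨xt, ut, hAdm, hTraj, if_pos h12, if_pos h12, rfl⟩
    have hcost : cost r q s₁ T xt ut =
        (∫ τ in s₁..s₂, r (x τ) (u τ)) + cost r q s₂ T x' u' := by
      have hEqr1 : Set.EqOn (fun τ => r (x τ) (u τ)) (fun τ => r (xt τ) (ut τ))
          (Set.uIcc s₁ s₂) := by
        intro τ hτ
        rw [Set.uIcc_of_le h12] at hτ
        simp only [hxt, hut, if_pos hτ.2]
      have hEqr2 : Set.EqOn (fun τ => r (x' τ) (u' τ)) (fun τ => r (xt τ) (ut τ))
          (Set.uIcc s₂ T) := by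
        intro τ hτ
        rw [Set.uIcc_of_le h2T] at hτ
        rcases eq_or_lt_of_le hτ.1 with h | h
        · simp only [hxt, hut, ← h, if_pos le_rfl, hx's, hu's]
        · simp only [hxt, hut, if_neg (not_le.2 h)]
      have ir2' : IntervalIntegrable (fun τ => r (x' τ) (u' τ)) volume s₂ T :=
        (hr'c.mono (Set.uIcc_of_le h2T).subset).intervalIntegrable
      have ir1 : IntervalIntegrable (fun τ => r (xt τ) (ut τ)) volume s₁ s₂ :=
        intervalIntegrable_congr' (fun τ hτ => hEqr1 (Set.uIoc_subset_uIcc hτ)) hrint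
      have ir2 : IntervalIntegrable (fun τ => r (xt τ) (ut τ)) volume s₂ T :=
        intervalIntegrable_congr' (fun τ hτ => hEqr2 (Set.uIoc_subset_uIcc hτ)) ir2'
      have hadd := intervalIntegral.integral_add_adjacent_intervals ir1 ir2
      have hqT : xt T = x' T := by
        by_cases hTs : T ≤ s₂
        · obtain rfl : s₂ = T := le_antisymm h2T hTs
          simp only [hxt, if_pos le_rfl, hx's]
        · exact if_neg hTs
      simp only [cost]
      rw [hqT, ← hadd, ← intervalIntegral.integral_congr hEqr1,
        ← intervalIntegral.integral_congr hEqr2, add_assoc]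
    calc Qfun f r q M T (x s₁) (u s₁) s₁ ≤ cost r q s₁ T xt ut := by
          rw [Qfun_eq_sInf]
          exact csInf_le (QSet_bddBelow hrb hqb _ _ _) hmem
      _ = _ := hcost
  have ne₂ : (QSet f r q M T (x s₂) (u s₂) s₂).Nonempty :=
    ⟨cost r q s₂ T x u, x, u, hu, traj_sub hx h2mem, rfl, rfl, rfl⟩
  have hle : Qfun f r q M T (x s₁) (u s₁) s₁ - (∫ τ in s₁..s₂, r (x τ) (u τ)) ≤
      Qfun f r q M T (x s₂) (u s₂) s₂ := by
    rw [Qfun_eq_sInf f r q M T (x s₂) (u s₂) s₂]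
    exact le_csInf ne₂ fun c hc => by linarith [key c hc]
  linarith

end QProof

/-- **Optimality criterion**: an admissible control `u` with trajectory `x`, `x(t) = x₀`,
`u(t) = u₀`, is optimal (attains the infimum defining `Q(x₀, u₀, t)`) if and only if
`g_u(s) := ∫_t^s r(x(τ), u(τ)) dτ + Q(x(s), u(s), s)` is non-increasing on `[t, T]`;
equivalently, if and only if `g_u` is constant on `[t, T]`. -/
theorem optimal_iff_g_antitone_iff_g_const {n m : ℕ}
    (f : EuclideanSpace ℝ (Fin n) → EuclideanSpace ℝ (Fin m) → EuclideanSpace ℝ (Fin n))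
    (r : EuclideanSpace ℝ (Fin n) → EuclideanSpace ℝ (Fin m) → ℝ)
    (q : EuclideanSpace ℝ (Fin n) → ℝ) (M T : ℝ) (hM : 0 < M)
    (Cf Cr Cq : ℝ)
    (hfb : ∀ x u, ‖f x u‖ ≤ Cf) (hrb : ∀ x u, |r x u| ≤ Cr) (hqb : ∀ x, |q x| ≤ Cq)
    (Kf Kr Kq : NNReal)
    (hfl : LipschitzWith Kf (fun p : EuclideanSpace ℝ (Fin n) × EuclideanSpace ℝ (Fin m) => f p.1 p.2))
    (hrl : LipschitzWith Kr (fun p : EuclideanSpace ℝ (Fin n) × EuclideanSpace ℝ (Fin m) => r p.1 p.2))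
    (hql : LipschitzWith Kq q)
    (x₀ : EuclideanSpace ℝ (Fin n)) (u₀ : EuclideanSpace ℝ (Fin m))
    (t : ℝ) (ht : t ∈ Set.Icc 0 T)
    (x : ℝ → EuclideanSpace ℝ (Fin n)) (u : ℝ → EuclideanSpace ℝ (Fin m))
    (hu : Adm M T u) (hx : IsTrajectory f t T x u) (hx₀ : x t = x₀) (hu₀ : u t = u₀) :
    (cost r q t T x u = Qfun f r q M T x₀ u₀ t ↔
      AntitoneOn
        (fun s => (∫ τ in t..s, r (x τ) (u τ)) + Qfun f r q M T (x s) (u s) s)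
        (Set.Icc t T)) ∧
    (cost r q t T x u = Qfun f r q M T x₀ u₀ t ↔
      ∀ s ∈ Set.Icc t T,
        (∫ τ in t..s, r (x τ) (u τ)) + Qfun f r q M T (x s) (u s) s =
          (∫ τ in t..t, r (x τ) (u τ)) + Qfun f r q M T (x t) (u t) t) := by
  obtain ⟨h0t, htT⟩ := ht
  set g : ℝ → ℝ := fun s => (∫ τ in t..s, r (x τ) (u τ)) + Qfun f r q M T (x s) (u s) s with hg
  have hxc := QProof.traj_cont hx htT
  have hrc : ContinuousOn (fun τ => r (x τ) (u τ)) (Set.Icc t T) :=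
    QProof.rcomp_cont hrl hxc (hu.continuousOn.mono (Set.Icc_subset_Icc h0t le_rfl))
  have hrint : ∀ s₁ s₂, t ≤ s₁ → s₁ ≤ s₂ → s₂ ≤ T →
      IntervalIntegrable (fun τ => r (x τ) (u τ)) volume s₁ s₂ := by
    intro s₁ s₂ h1 h2 h3
    apply (hrc.mono ?_).intervalIntegrable
    rw [Set.uIcc_of_le h2]
    exact Set.Icc_subset_Icc h1 h3
  have hmono : ∀ s₁ s₂, t ≤ s₁ → s₁ ≤ s₂ → s₂ ≤ T → g s₁ ≤ g s₂ := by
    intro s₁ s₂ h1 h2 h3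
    have hQ := QProof.Q_mono hrb hqb hrl h0t hu hx h1 h2 h3
    have hadd := intervalIntegral.integral_add_adjacent_intervals
      (hrint t s₁ le_rfl h1 (h2.trans h3)) (hrint s₁ s₂ h1 h2 h3)
    simp only [hg]
    linarith
  have hgt : g t = Qfun f r q M T x₀ u₀ t := by
    simp only [hg, intervalIntegral.integral_same, hx₀, hu₀, zero_add]
  have hgT : g T = cost r q t T x u := by
    simp only [hg]
    rw [QProof.Qfun_at_T hrb hqb]
    rfl
  have hQle : Qfun f r q M T x₀ u₀ t ≤ cost r q t T x u := by
    rw [QProof.Qfun_eq_sInf]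
    exact csInf_le (QProof.QSet_bddBelow hrb hqb _ _ _) ⟨x, u, hu, hx, hx₀, hu₀, rfl⟩
  constructor
  · constructor
    · intro hopt a ha b hb hab
      show g b ≤ g a
      calc g b ≤ g T := hmono b T hb.1 hb.2 le_rfl
        _ = g t := by rw [hgT, hopt, ← hgt]
        _ ≤ g a := hmono t a le_rfl ha.1 ha.2
    · intro hanti
      have h1 : g T ≤ g t := hanti ⟨le_rfl, htT⟩ ⟨htT, le_rfl⟩ htT
      rw [hgT, hgt] at h1
      exact le_antisymm h1 hQle
  · constructor
    · intro hopt s hs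
      show g s = g t
      have h1 : g t ≤ g s := hmono t s le_rfl hs.1 hs.2
      have h2 : g s ≤ g T := hmono s T hs.1 hs.2 le_rfl
      have h3 : g T = g t := by rw [hgT, hopt, ← hgt]
      linarith
    · intro hconst
      have h1 : g T = g t := hconst T ⟨htT, le_rfl⟩
      rw [hgT, hgt] at h1
      exact h1

end
end

section
/- Under assumptions (A1) and (A2) (f, r, q bounded and Lipschitz continuous), the Q-function Q : ℝ^n × ℝ^m × [0,T] → ℝ is Lipschitz continuous, i.e., there exists a constant L such that |Q(x, u, t) − Q(x', u', t')| ≤ L(|x − x'| + |u − u'| + |t − t'|) for all (x, u, t), (x', u', t') ∈ ℝ^n × ℝ^m × [0,T]. -/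
open MeasureTheory Set

noncomputable section

section Aux


open intervalIntegral Real

variable {n m : ℕ}
variable {f : EuclideanSpace ℝ (Fin n) → EuclideanSpace ℝ (Fin m) → EuclideanSpace ℝ (Fin n)}
variable {r : EuclideanSpace ℝ (Fin n) → EuclideanSpace ℝ (Fin m) → ℝ}
variable {q : EuclideanSpace ℝ (Fin n) → ℝ}
variable {M T t Cf Cr Cq : ℝ} {Kf Kr Kq : NNReal}
variable {x : ℝ → EuclideanSpace ℝ (Fin n)} {u : ℝ → EuclideanSpace ℝ (Fin m)}

lemma lipf (hfl : LipschitzWith Kf (fun p : EuclideanSpace ℝ (Fin n) × EuclideanSpace ℝ (Fin m) => f p.1 p.2))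
    (c : EuclideanSpace ℝ (Fin m)) : LipschitzWith Kf (fun y => f y c) := by
  have := hfl.comp (LipschitzWith.prodMk_right c)
  rw [mul_one] at this
  exact this

lemma exp_sub_one_le (y : ℝ) : Real.exp y - 1 ≤ y * Real.exp y := by
  have h := mul_le_mul_of_nonneg_right (Real.add_one_le_exp (-y)) (Real.exp_pos y).le
  rw [← Real.exp_add] at h
  simp only [neg_add_cancel, Real.exp_zero] at h
  nlinarith

lemma gronwallBound_le' {δ K ε s T' : ℝ} (hδ : 0 ≤ δ) (hK : 0 ≤ K) (hε : 0 ≤ ε)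
    (hs : 0 ≤ s) (hsT : s ≤ T') : gronwallBound δ K ε s ≤ (δ + ε * T') * Real.exp (K * T') := by
  have hT' : 0 ≤ T' := hs.trans hsT
  have h1 : Real.exp (K * s) ≤ Real.exp (K * T') := Real.exp_le_exp.2 (by nlinarith)
  have hep := Real.exp_pos (K * s)
  have hep' := Real.exp_pos (K * T')
  rcases eq_or_lt_of_le hK with hK0 | hK0
  · subst hK0
    rw [gronwallBound_K0]
    have h0 : Real.exp ((0:ℝ) * T') = 1 := by simp
    rw [h0]
    simp only []
    nlinarith
  · rw [gronwallBound_of_K_ne_0 hK0.ne']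
    have h2 : Real.exp (K * s) - 1 ≤ (K * s) * Real.exp (K * s) := exp_sub_one_le _
    have h3 : ε / K * (Real.exp (K * s) - 1) ≤ ε * s * Real.exp (K * s) := by
      have := mul_le_mul_of_nonneg_left h2 (div_nonneg hε hK)
      calc ε / K * (Real.exp (K * s) - 1) ≤ ε / K * (K * s * Real.exp (K * s)) := this
        _ = ε * s * Real.exp (K * s) := by field_simp
    have h4 : ε * s * Real.exp (K * s) ≤ ε * T' * Real.exp (K * T') := by
      calc ε * s * Real.exp (K * s) ≤ ε * s * Real.exp (K * T') :=
            mul_le_mul_of_nonneg_left h1 (by positivity)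
        _ ≤ ε * T' * Real.exp (K * T') := by nlinarith [mul_nonneg (mul_nonneg hε (sub_nonneg.2 hsT)) hep'.le]
    have h5 : δ * Real.exp (K * s) ≤ δ * Real.exp (K * T') := by nlinarith
    nlinarith

lemma sInf_le_sInf_add {S S' : Set ℝ} (hS : BddBelow S) (hS' : S'.Nonempty) {D : ℝ}
    (h : ∀ c ∈ S', ∃ d ∈ S, d ≤ c + D) : sInf S ≤ sInf S' + D := by
  rw [← sub_le_iff_le_add]
  apply le_csInf hS'
  intro c hc
  obtain ⟨d, hd, hdc⟩ := h c hc
  have := csInf_le hS hd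
  linarith

lemma traj_contOn {t : ℝ} (htT : t ≤ T) (hx : IsTrajectory f t T x u) :
    ContinuousOn x (Set.Icc t T) := by
  have hint : IntervalIntegrable (fun τ => f (x τ) (u τ)) volume t T := (hx T ⟨htT, le_rfl⟩).1
  have hprim : ContinuousOn (fun s => x t + ∫ τ in t..s, f (x τ) (u τ)) (Set.Icc t T) := by
    have h := intervalIntegral.continuousOn_primitive_interval' hint
      (by rw [Set.uIcc_of_le htT]; exact Set.left_mem_Icc.2 htT)
    rw [Set.uIcc_of_le htT] at h
    exact continuousOn_const.add h
  exact hprim.congr fun s hs => (hx s hs).2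

lemma traj_speed {t : ℝ} (hfb : ∀ y v, ‖f y v‖ ≤ Cf)
    (hx : IsTrajectory f t T x u) {s s' : ℝ} (hs : s ∈ Set.Icc t T) (hs' : s' ∈ Set.Icc t T) :
    dist (x s) (x s') ≤ Cf * |s - s'| := by
  have key : ∀ a b : ℝ, a ∈ Set.Icc t T → b ∈ Set.Icc t T → a ≤ b →
      dist (x a) (x b) ≤ Cf * |a - b| := by
    intro a b ha hb hab
    have h1 := (hx a ha).2
    have h2 := (hx b hb).2
    have hsub : x b - x a = ∫ τ in a..b, f (x τ) (u τ) := by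
      rw [h1, h2, ← intervalIntegral.integral_interval_sub_left (hx b hb).1 (hx a ha).1]
      abel
    rw [dist_eq_norm, ← neg_sub, norm_neg, hsub]
    have := intervalIntegral.norm_integral_le_of_norm_le_const
      (C := Cf) (f := fun τ => f (x τ) (u τ)) (a := a) (b := b) (fun τ _ => hfb _ _)
    rwa [abs_sub_comm] at this
  rcases le_total s s' with h | h
  · exact key s s' hs hs' h
  · rw [dist_comm, abs_sub_comm]; exact key s' s hs' hs h


lemma traj_deriv {t : ℝ} (h0t : 0 ≤ t) (htT : t ≤ T)
    (hfl : LipschitzWith Kf (fun p : EuclideanSpace ℝ (Fin n) × EuclideanSpace ℝ (Fin m) => f p.1 p.2))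
    (hx : IsTrajectory f t T x u) (hucont : ContinuousOn u (Set.Icc 0 T))
    {s : ℝ} (hs : s ∈ Set.Ico t T) :
    HasDerivWithinAt x (f (x s) (u s)) (Set.Ici s) s := by
  set F' : ℝ → EuclideanSpace ℝ (Fin n) := fun τ => f (x τ) (u τ) with hF'
  have hxc := traj_contOn htT hx
  have hFc : ContinuousOn F' (Set.Icc t T) :=
    hfl.continuous.comp_continuousOn (hxc.prodMk (hucont.mono (Set.Icc_subset_Icc h0t le_rfl)))
  have hmem : Set.Icc s T ∈ nhdsWithin s (Set.Ici s) := by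
    rw [← Set.Ici_inter_Iic]
    exact inter_mem_nhdsWithin _ (Iic_mem_nhds hs.2)
  have hmem' : Set.Icc t T ∈ nhdsWithin s (Set.Ici s) :=
    Filter.mem_of_superset hmem (Set.Icc_subset_Icc hs.1 le_rfl)
  have hmem'' : Set.Icc t T ∈ nhdsWithin s (Set.Ioi s) :=
    nhdsWithin_mono s (Set.Ioi_subset_Ici le_rfl) hmem'
  have hsIcc : s ∈ Set.Icc t T := ⟨hs.1, hs.2.le⟩
  have hprim : HasDerivWithinAt (fun b => ∫ τ in t..b, F' τ) (F' s) (Set.Ici s) s := by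
    refine intervalIntegral.integral_hasDerivWithinAt_right (t := Set.Ioi s) (hx s hsIcc).1
      ⟨Set.Icc t T, hmem'', hFc.aestronglyMeasurable measurableSet_Icc⟩ ?_
    exact (hFc s hsIcc).mono_of_mem_nhdsWithin hmem''
  have h2 : HasDerivWithinAt (fun b => x t + ∫ τ in t..b, F' τ) (F' s) (Set.Ici s) s :=
    hprim.const_add _
  refine h2.congr_of_eventuallyEq ?_ (hx s hsIcc).2
  filter_upwards [hmem'] with τ hτ using (hx τ hτ).2

lemma exists_traj (hfb : ∀ y v, ‖f y v‖ ≤ Cf)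
    (hfl : LipschitzWith Kf (fun p : EuclideanSpace ℝ (Fin n) × EuclideanSpace ℝ (Fin m) => f p.1 p.2))
    {t : ℝ} (h0t : 0 ≤ t) (htT : t ≤ T) (hucont : ContinuousOn u (Set.Icc 0 T))
    (x₀ : EuclideanSpace ℝ (Fin n)) :
    ∃ x, IsTrajectory f t T x u ∧ x t = x₀ := by
  have hCf0 : 0 ≤ Cf := le_trans (norm_nonneg _) (hfb 0 0)
  have hucont' : ContinuousOn u (Set.Icc t T) := hucont.mono (Set.Icc_subset_Icc h0t le_rfl)
  have hpl : IsPicardLindelof (fun s y => f y (u s)) (⟨t, Set.left_mem_Icc.2 htT⟩ : Set.Icc t T) x₀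
      (Real.toNNReal (Cf * (T - t))) 0 (Real.toNNReal Cf) Kf :=
    { lipschitzOnWith := fun s _ => (lipf hfl (u s)).lipschitzOnWith
      continuousOn := fun y _ =>
        hfl.continuous.comp_continuousOn (continuousOn_const.prodMk hucont')
      norm_le := fun s _ y _ => (hfb y (u s)).trans (Real.le_coe_toNNReal Cf)
      mul_max_le := by
        rw [Real.coe_toNNReal _ hCf0, Real.coe_toNNReal _ (mul_nonneg hCf0 (sub_nonneg.2 htT))]
        simp [max_eq_left (sub_nonneg.2 htT)] }
  obtain ⟨g, hg0, hgd⟩ := IsPicardLindelof.exists_eq_forall_mem_Icc_hasDerivWithinAt₀ hpl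
  have hgc : ContinuousOn g (Set.Icc t T) := fun s hs => (hgd s hs).continuousWithinAt
  have hGc : ContinuousOn (fun τ => f (g τ) (u τ)) (Set.Icc t T) :=
    hfl.continuous.comp_continuousOn (hgc.prodMk hucont')
  refine ⟨g, fun s hs => ?_, hg0⟩
  have hsub : Set.uIcc t s ⊆ Set.Icc t T := by
    rw [Set.uIcc_of_le hs.1]; exact Set.Icc_subset_Icc le_rfl hs.2
  have hint : IntervalIntegrable (fun τ => f (g τ) (u τ)) volume t s :=
    (hGc.mono hsub).intervalIntegrable
  refine ⟨hint, ?_⟩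
  have heq := intervalIntegral.integral_eq_sub_of_hasDeriv_right_of_le hs.1
    (hgc.mono (Set.Icc_subset_Icc le_rfl hs.2)) (fun τ hτ => ?_) hint
  · rw [heq]; abel
  · have h := hgd τ ⟨hτ.1.le, hτ.2.le.trans hs.2⟩
    exact (h.hasDerivAt (Icc_mem_nhds hτ.1 (lt_of_lt_of_le hτ.2 hs.2))).hasDerivWithinAt
def QSet (f : EuclideanSpace ℝ (Fin n) → EuclideanSpace ℝ (Fin m) → EuclideanSpace ℝ (Fin n))
    (r : EuclideanSpace ℝ (Fin n) → EuclideanSpace ℝ (Fin m) → ℝ)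
    (q : EuclideanSpace ℝ (Fin n) → ℝ) (M T : ℝ)
    (x₀ : EuclideanSpace ℝ (Fin n)) (u₀ : EuclideanSpace ℝ (Fin m)) (t : ℝ) : Set ℝ :=
  { c : ℝ | ∃ x u, Adm M T u ∧ IsTrajectory f t T x u ∧
      x t = x₀ ∧ u t = u₀ ∧ c = cost r q t T x u }

lemma Qfun_eq_sInf (x₀ : EuclideanSpace ℝ (Fin n)) (u₀ : EuclideanSpace ℝ (Fin m)) (t : ℝ) :
    Qfun f r q M T x₀ u₀ t = sInf (QSet f r q M T x₀ u₀ t) := rfl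

lemma QSet_nonempty (hfb : ∀ y v, ‖f y v‖ ≤ Cf)
    (hfl : LipschitzWith Kf (fun p : EuclideanSpace ℝ (Fin n) × EuclideanSpace ℝ (Fin m) => f p.1 p.2))
    (h0t : 0 ≤ t) (htT : t ≤ T)
    (x₀ : EuclideanSpace ℝ (Fin n)) (u₀ : EuclideanSpace ℝ (Fin m)) :
    (QSet f r q M T x₀ u₀ t).Nonempty := by
  obtain ⟨x, hx, hx0⟩ := exists_traj hfb hfl h0t htT (u := fun _ => u₀) continuousOn_const x₀
  exact ⟨cost r q t T x (fun _ => u₀), x, fun _ => u₀,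
    ((LipschitzWith.const u₀).weaken zero_le).lipschitzOnWith, hx, hx0, rfl, rfl⟩

lemma QSet_lb (hrb : ∀ y v, |r y v| ≤ Cr) (hqb : ∀ y, |q y| ≤ Cq)
    (h0t : 0 ≤ t) (htT : t ≤ T) {x₀ : EuclideanSpace ℝ (Fin n)}
    {u₀ : EuclideanSpace ℝ (Fin m)} :
    ∀ c ∈ QSet f r q M T x₀ u₀ t, -(Cr * T + Cq) ≤ c := by
  rintro c ⟨x, u, hu, hx, hxt, hut, rfl⟩
  have hCr0 : 0 ≤ Cr := (abs_nonneg _).trans (hrb 0 0)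
  have hI : ‖∫ s in t..T, r (x s) (u s)‖ ≤ Cr * |T - t| :=
    intervalIntegral.norm_integral_le_of_norm_le_const
      (fun s _ => by simpa [Real.norm_eq_abs] using hrb (x s) (u s))
  rw [Real.norm_eq_abs] at hI
  have habs : |T - t| ≤ T := by rw [abs_of_nonneg (by linarith)]; linarith
  have h1 : Cr * |T - t| ≤ Cr * T := mul_le_mul_of_nonneg_left habs hCr0
  have h2 := abs_le.1 (hqb (x T))
  have h3 := abs_le.1 hI
  unfold cost
  linarith [h3.1, h2.1]

lemma QSet_bddBelow (hrb : ∀ y v, |r y v| ≤ Cr) (hqb : ∀ y, |q y| ≤ Cq)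
    (h0t : 0 ≤ t) (htT : t ≤ T) {x₀ : EuclideanSpace ℝ (Fin n)}
    {u₀ : EuclideanSpace ℝ (Fin m)} :
    BddBelow (QSet f r q M T x₀ u₀ t) :=
  ⟨-(Cr * T + Cq), fun c hc => QSet_lb hrb hqb h0t htT c hc⟩

lemma cost_integrand_cont
    (hrl : LipschitzWith Kr (fun p : EuclideanSpace ℝ (Fin n) × EuclideanSpace ℝ (Fin m) => r p.1 p.2))
    (htT : t ≤ T) (h0t : 0 ≤ t) (hx : IsTrajectory f t T x u)
    (hucont : ContinuousOn u (Set.Icc 0 T)) :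
    ContinuousOn (fun s => r (x s) (u s)) (Set.Icc t T) :=
  hrl.continuous.comp_continuousOn ((traj_contOn htT hx).prodMk
    (hucont.mono (Set.Icc_subset_Icc h0t le_rfl)))
lemma gen_compare
    (hfb : ∀ y v, ‖f y v‖ ≤ Cf) (hrb : ∀ y v, |r y v| ≤ Cr)
    (hfl : LipschitzWith Kf (fun p : EuclideanSpace ℝ (Fin n) × EuclideanSpace ℝ (Fin m) => f p.1 p.2))
    (hrl : LipschitzWith Kr (fun p : EuclideanSpace ℝ (Fin n) × EuclideanSpace ℝ (Fin m) => r p.1 p.2))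
    (hql : LipschitzWith Kq q)
    {t t' : ℝ} (h0t : 0 ≤ t) (htt' : t ≤ t') (ht'T : t' ≤ T)
    {x : ℝ → EuclideanSpace ℝ (Fin n)} {u : ℝ → EuclideanSpace ℝ (Fin m)}
    (hu : Adm M T u) (hx : IsTrajectory f t' T x u)
    {v : ℝ → EuclideanSpace ℝ (Fin m)} (hv : Adm M T v) {η : ℝ} (hη : 0 ≤ η)
    (hclose : ∀ s ∈ Set.Icc t' T, dist (v s) (u s) ≤ η)
    (x₀ : EuclideanSpace ℝ (Fin n)) :
    ∃ y, IsTrajectory f t T y v ∧ y t = x₀ ∧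
      cost r q t T y v ≤ cost r q t' T x u +
        (Cr * (t' - t) + ((Kr : ℝ) * T + (Kq : ℝ)) *
          ((dist x₀ (x t') + Cf * (t' - t) + (Kf : ℝ) * η * T) * Real.exp ((Kf : ℝ) * T))
          + (Kr : ℝ) * T * η) := by
  have htT : t ≤ T := htt'.trans ht'T
  have h0t' : 0 ≤ t' := h0t.trans htt'
  have h0T : 0 ≤ T := h0t'.trans ht'T
  have hCf0 : 0 ≤ Cf := le_trans (norm_nonneg _) (hfb 0 0)
  have hCr0 : 0 ≤ Cr := (abs_nonneg _).trans (hrb 0 0)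
  have hvc : ContinuousOn v (Set.Icc 0 T) := hv.continuousOn
  have huc : ContinuousOn u (Set.Icc 0 T) := hu.continuousOn
  obtain ⟨y, hy, hy0⟩ := exists_traj hfb hfl h0t htT hvc x₀
  have hδ0 : 0 ≤ t' - t := sub_nonneg.2 htt'
  have hD0 : 0 ≤ dist x₀ (x t') := dist_nonneg
  set G := (dist x₀ (x t') + Cf * (t' - t) + (Kf : ℝ) * η * T) * Real.exp ((Kf : ℝ) * T) with hGdef
  have hG0 : 0 ≤ G := by
    apply mul_nonneg _ (Real.exp_pos _).le
    have : 0 ≤ (Kf : ℝ) * η * T := by positivity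
    nlinarith [mul_nonneg hCf0 hδ0]
  have hxc : ContinuousOn x (Set.Icc t' T) := traj_contOn ht'T hx
  have hyc : ContinuousOn y (Set.Icc t T) := traj_contOn htT hy
  have ha : dist (x t') (y t') ≤ dist x₀ (x t') + Cf * (t' - t) := by
    have h1 : dist (y t) (y t') ≤ Cf * |t - t'| :=
      traj_speed hfb hy ⟨le_rfl, htT⟩ ⟨htt', ht'T⟩
    rw [abs_of_nonpos (by linarith), neg_sub] at h1
    have h2 := dist_triangle (x t') (y t) (y t')
    rw [hy0] at h1 h2
    have h3 : dist (x t') x₀ = dist x₀ (x t') := dist_comm _ _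
    linarith
  have key : ∀ s ∈ Set.Icc t' T, dist (x s) (y s) ≤ G := by
    intro s hs
    have hgron := dist_le_of_approx_trajectories_ODE
      (v := fun σ z => f z (u σ)) (K := Kf)
      (f' := fun σ => f (x σ) (u σ)) (g' := fun σ => f (y σ) (v σ))
      (εf := 0) (εg := (Kf : ℝ) * η)
      (fun σ => lipf hfl (u σ))
      hxc
      (fun σ hσ => traj_deriv h0t' ht'T hfl hx huc hσ)
      (fun σ _ => by simp)
      (hyc.mono (Set.Icc_subset_Icc htt' le_rfl))
      (fun σ hσ => traj_deriv h0t htT hfl hy hvc ⟨htt'.trans hσ.1, hσ.2⟩)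
      (fun σ hσ => ?_)
      ha s hs
    · refine hgron.trans ?_
      have hb := gronwallBound_le' (δ := dist x₀ (x t') + Cf * (t' - t)) (K := (Kf : ℝ))
        (ε := 0 + (Kf : ℝ) * η)
        (s := s - t') (T' := T)
        (by nlinarith [mul_nonneg hCf0 hδ0]) Kf.coe_nonneg (by positivity)
        (by linarith [hs.1]) (by linarith [hs.2])
      refine hb.trans (le_of_eq ?_)
      rw [hGdef]; ring
    · have h1 := hfl.dist_le_mul (y σ, v σ) (y σ, u σ)
      have h2 : dist ((y σ, v σ) : EuclideanSpace ℝ (Fin n) × EuclideanSpace ℝ (Fin m)) (y σ, u σ)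
          = dist (v σ) (u σ) := by
        rw [Prod.dist_eq]; simp [max_eq_right dist_nonneg]
      rw [h2] at h1
      exact h1.trans (mul_le_mul_of_nonneg_left (hclose σ ⟨hσ.1, hσ.2.le⟩) Kf.coe_nonneg)
  -- cost estimates
  have hryc : ContinuousOn (fun s => r (y s) (v s)) (Set.Icc t T) :=
    cost_integrand_cont hrl htT h0t hy hvc
  have hrxc : ContinuousOn (fun s => r (x s) (u s)) (Set.Icc t' T) :=
    cost_integrand_cont hrl ht'T h0t' hx huc
  have hi1 : IntervalIntegrable (fun s => r (y s) (v s)) volume t t' :=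
    (hryc.mono (by rw [Set.uIcc_of_le htt']; exact Set.Icc_subset_Icc le_rfl ht'T)).intervalIntegrable
  have hi2 : IntervalIntegrable (fun s => r (y s) (v s)) volume t' T :=
    (hryc.mono (by rw [Set.uIcc_of_le ht'T]; exact Set.Icc_subset_Icc htt' le_rfl)).intervalIntegrable
  have hi3 : IntervalIntegrable (fun s => r (x s) (u s)) volume t' T :=
    (hrxc.mono (by rw [Set.uIcc_of_le ht'T])).intervalIntegrable
  have hsplit : (∫ s in t..T, r (y s) (v s))
      = (∫ s in t..t', r (y s) (v s)) + ∫ s in t'..T, r (y s) (v s) :=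
    (intervalIntegral.integral_add_adjacent_intervals hi1 hi2).symm
  have hA : |∫ s in t..t', r (y s) (v s)| ≤ Cr * (t' - t) := by
    have h := intervalIntegral.norm_integral_le_of_norm_le_const (C := Cr)
      (f := fun s => r (y s) (v s)) (a := t) (b := t')
      (fun s _ => by simpa [Real.norm_eq_abs] using hrb (y s) (v s))
    rw [Real.norm_eq_abs, abs_of_nonneg (sub_nonneg.2 htt')] at h
    exact h
  have hB : |(∫ s in t'..T, r (y s) (v s)) - ∫ s in t'..T, r (x s) (u s)|
      ≤ (Kr : ℝ) * (G + η) * (T - t') := by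
    rw [← intervalIntegral.integral_sub hi2 hi3]
    have h := intervalIntegral.norm_integral_le_of_norm_le_const (C := (Kr : ℝ) * (G + η))
      (f := fun s => r (y s) (v s) - r (x s) (u s)) (a := t') (b := T) (fun s hsmem => ?_)
    · rw [Real.norm_eq_abs, abs_of_nonneg (sub_nonneg.2 ht'T)] at h
      exact h
    · have hsmem' : s ∈ Set.Icc t' T := Set.Ioc_subset_Icc_self
        (by rwa [Set.uIoc_of_le ht'T] at hsmem)
      have h1 := hrl.dist_le_mul (y s, v s) (x s, u s)
      rw [Real.dist_eq] at h1
      have h2 : dist ((y s, v s) : EuclideanSpace ℝ (Fin n) × EuclideanSpace ℝ (Fin m)) (x s, u s)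
          ≤ G + η := by
        rw [Prod.dist_eq]
        refine max_le ?_ ?_
        · rw [dist_comm]; linarith [key s hsmem']
        · linarith [hclose s hsmem']
      rw [Real.norm_eq_abs]
      exact h1.trans (mul_le_mul_of_nonneg_left h2 Kr.coe_nonneg)
  have hB' : (Kr : ℝ) * (G + η) * (T - t') ≤ (Kr : ℝ) * T * G + (Kr : ℝ) * T * η := by
    nlinarith [Kr.coe_nonneg, mul_nonneg Kr.coe_nonneg (add_nonneg hG0 hη),
      mul_nonneg (mul_nonneg Kr.coe_nonneg (add_nonneg hG0 hη)) h0t']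
  have hq : |q (y T) - q (x T)| ≤ (Kq : ℝ) * G := by
    have h1 := hql.dist_le_mul (y T) (x T)
    rw [Real.dist_eq] at h1
    refine h1.trans ?_
    rw [dist_comm]
    exact mul_le_mul_of_nonneg_left (key T ⟨ht'T, le_rfl⟩) Kq.coe_nonneg
  refine ⟨y, hy, hy0, ?_⟩
  unfold cost
  rw [hsplit]
  have e1 := abs_le.1 hA
  have e2 := abs_le.1 hB
  have e3 := abs_le.1 hq
  linarith [e1.2, e2.2, e3.2]
lemma shift_compare
    (hfb : ∀ y v, ‖f y v‖ ≤ Cf) (hrb : ∀ y v, |r y v| ≤ Cr)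
    (hfl : LipschitzWith Kf (fun p : EuclideanSpace ℝ (Fin n) × EuclideanSpace ℝ (Fin m) => f p.1 p.2))
    (hrl : LipschitzWith Kr (fun p : EuclideanSpace ℝ (Fin n) × EuclideanSpace ℝ (Fin m) => r p.1 p.2))
    (hql : LipschitzWith Kq q)
    {t t' : ℝ} (h0t : 0 ≤ t) (htt' : t ≤ t') (ht'T : t' ≤ T)
    {x : ℝ → EuclideanSpace ℝ (Fin n)} {u : ℝ → EuclideanSpace ℝ (Fin m)}
    (hu : Adm M T u) (hx : IsTrajectory f t T x u) :
    ∃ y w, Adm M T w ∧ IsTrajectory f t' T y w ∧ y t' = x t ∧ w t' = u t ∧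
      cost r q t' T y w ≤ cost r q t T x u + (Cr + (Kq : ℝ) * Cf) * (t' - t) := by
  have htT : t ≤ T := htt'.trans ht'T
  have h0t' : 0 ≤ t' := h0t.trans htt'
  have h0T : 0 ≤ T := h0t'.trans ht'T
  have hδ0 : 0 ≤ t' - t := sub_nonneg.2 htt'
  set φ : ℝ → ℝ := fun s => max (s - (t' - t)) t with hφdef
  have hφc : Continuous φ := (continuous_id.sub continuous_const).max continuous_const
  have hφlip : ∀ a b : ℝ, |φ a - φ b| ≤ |a - b| := by
    intro a b
    have := abs_max_sub_max_le_abs (a - (t' - t)) (b - (t' - t)) t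
    rwa [show a - (t' - t) - (b - (t' - t)) = a - b by ring] at this
  have hφmem : ∀ s ∈ Set.Icc (0:ℝ) T, φ s ∈ Set.Icc (0:ℝ) T := by
    intro s hs
    constructor
    · exact h0t.trans (le_max_right _ _)
    · exact max_le (by linarith [hs.2]) htT
  have hφmem' : ∀ s ∈ Set.Icc t' T, φ s ∈ Set.Icc t T := by
    intro s hs
    exact ⟨le_max_right _ _, max_le (by linarith [hs.2]) htT⟩
  have hφeq : ∀ s, t' ≤ s → φ s = s - (t' - t) := fun s hs => max_eq_left (by linarith)
  have hφt' : φ t' = t := by rw [hφeq t' le_rfl]; ring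
  set y : ℝ → EuclideanSpace ℝ (Fin n) := fun s => x (φ s) with hydef
  set w : ℝ → EuclideanSpace ℝ (Fin m) := fun s => u (φ s) with hwdef
  have huc : ContinuousOn u (Set.Icc 0 T) := hu.continuousOn
  have hxc : ContinuousOn x (Set.Icc t T) := traj_contOn htT hx
  have hw : Adm M T w := by
    rw [show Adm M T w = LipschitzOnWith (Real.toNNReal M) w (Set.Icc 0 T) from rfl,
      lipschitzOnWith_iff_dist_le_mul]
    intro a ha b hb
    have h1 := (lipschitzOnWith_iff_dist_le_mul.1 hu) (φ a) (hφmem a ha) (φ b) (hφmem b hb)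
    refine h1.trans (mul_le_mul_of_nonneg_left ?_ (Real.toNNReal M).coe_nonneg)
    rw [Real.dist_eq, Real.dist_eq]
    exact hφlip a b
  have hyc : ContinuousOn y (Set.Icc t' T) :=
    hxc.comp hφc.continuousOn fun a ha => hφmem' a ha
  have hwc : ContinuousOn w (Set.Icc t' T) :=
    huc.comp hφc.continuousOn fun a ha => hφmem a ⟨h0t'.trans ha.1, ha.2⟩
  have hFc : ContinuousOn (fun τ => f (y τ) (w τ)) (Set.Icc t' T) :=
    hfl.continuous.comp_continuousOn (hyc.prodMk hwc)
  have htraj : IsTrajectory f t' T y w := by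
    intro s hs
    have hsδ : s - (t' - t) ∈ Set.Icc t T := ⟨by linarith [hs.1], by linarith [hs.2]⟩
    have hint : IntervalIntegrable (fun τ => f (y τ) (w τ)) volume t' s :=
      (hFc.mono (by rw [Set.uIcc_of_le hs.1]; exact Set.Icc_subset_Icc le_rfl hs.2)).intervalIntegrable
    refine ⟨hint, ?_⟩
    have h2 : (∫ τ in t'..s, f (y τ) (w τ))
        = ∫ τ in t'..s, f (x (τ - (t' - t))) (u (τ - (t' - t))) := by
      refine intervalIntegral.integral_congr fun τ hτ => ?_
      rw [Set.uIcc_of_le hs.1] at hτ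
      simp only [hydef, hwdef, hφeq τ hτ.1]
    have h3 : (∫ τ in t'..s, f (x (τ - (t' - t))) (u (τ - (t' - t))))
        = ∫ τ in t..(s - (t' - t)), f (x τ) (u τ) := by
      have h := intervalIntegral.integral_comp_sub_right (a := t') (b := s)
        (fun τ => f (x τ) (u τ)) (t' - t)
      rwa [show t' - (t' - t) = t by ring] at h
    have h1 := (hx (s - (t' - t)) hsδ).2
    show x (φ s) = x (φ t') + ∫ τ in t'..s, f (y τ) (w τ)
    rw [hφt', hφeq s hs.1, h2, h3]
    exact h1
  have hTδ : T - (t' - t) ∈ Set.Icc t T := ⟨by linarith, by linarith⟩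
  have hrxc : ContinuousOn (fun s => r (x s) (u s)) (Set.Icc t T) :=
    cost_integrand_cont hrl htT h0t hx huc
  have hj1 : IntervalIntegrable (fun s => r (x s) (u s)) volume t (T - (t' - t)) :=
    (hrxc.mono (by rw [Set.uIcc_of_le hTδ.1]; exact Set.Icc_subset_Icc le_rfl hTδ.2)).intervalIntegrable
  have hj2 : IntervalIntegrable (fun s => r (x s) (u s)) volume (T - (t' - t)) T :=
    (hrxc.mono (by rw [Set.uIcc_of_le hTδ.2]; exact Set.Icc_subset_Icc hTδ.1 le_rfl)).intervalIntegrable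
  have hsplit : (∫ s in t..T, r (x s) (u s))
      = (∫ s in t..(T - (t' - t)), r (x s) (u s)) + ∫ s in (T - (t' - t))..T, r (x s) (u s) :=
    (intervalIntegral.integral_add_adjacent_intervals hj1 hj2).symm
  have hr1 : (∫ s in t'..T, r (y s) (w s))
      = ∫ s in t..(T - (t' - t)), r (x s) (u s) := by
    have ha : (∫ s in t'..T, r (y s) (w s))
        = ∫ s in t'..T, r (x (s - (t' - t))) (u (s - (t' - t))) := by
      refine intervalIntegral.integral_congr fun τ hτ => ?_
      rw [Set.uIcc_of_le ht'T] at hτ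
      simp only [hydef, hwdef, hφeq τ hτ.1]
    have hb := intervalIntegral.integral_comp_sub_right (a := t') (b := T)
      (fun s => r (x s) (u s)) (t' - t)
    rw [show t' - (t' - t) = t by ring] at hb
    rw [ha, hb]
  have hrem : |∫ s in (T - (t' - t))..T, r (x s) (u s)| ≤ Cr * (t' - t) := by
    have h := intervalIntegral.norm_integral_le_of_norm_le_const (C := Cr)
      (f := fun s => r (x s) (u s)) (a := T - (t' - t)) (b := T)
      (fun s _ => by simpa [Real.norm_eq_abs] using hrb (x s) (u s))
    rwa [Real.norm_eq_abs, show T - (T - (t' - t)) = t' - t by ring,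
      abs_of_nonneg hδ0] at h
  have hqd : |q (x (T - (t' - t))) - q (x T)| ≤ (Kq : ℝ) * (Cf * (t' - t)) := by
    have h1 := hql.dist_le_mul (x (T - (t' - t))) (x T)
    rw [Real.dist_eq] at h1
    refine h1.trans (mul_le_mul_of_nonneg_left ?_ Kq.coe_nonneg)
    have := traj_speed hfb hx hTδ ⟨htT, le_rfl⟩
    rwa [show T - (t' - t) - T = -(t' - t) by ring, abs_neg, abs_of_nonneg hδ0] at this
  have hyT : y T = x (T - (t' - t)) := by
    show x (φ T) = _
    rw [hφeq T ht'T]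
  refine ⟨y, w, hw, htraj, by rw [hydef]; simp [hφt'], by rw [hwdef]; simp [hφt'], ?_⟩
  unfold cost
  rw [hr1, hyT, hsplit]
  have e1 := abs_le.1 hrem
  have e2 := abs_le.1 hqd
  have hexp : (Cr + (Kq : ℝ) * Cf) * (t' - t)
      = Cr * (t' - t) + (Kq : ℝ) * (Cf * (t' - t)) := by ring
  linarith [e1.1, e2.2]
lemma Q_le_Q
    (hfb : ∀ y v, ‖f y v‖ ≤ Cf) (hrb : ∀ y v, |r y v| ≤ Cr) (hqb : ∀ y, |q y| ≤ Cq)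
    (hfl : LipschitzWith Kf (fun p : EuclideanSpace ℝ (Fin n) × EuclideanSpace ℝ (Fin m) => f p.1 p.2))
    (hrl : LipschitzWith Kr (fun p : EuclideanSpace ℝ (Fin n) × EuclideanSpace ℝ (Fin m) => r p.1 p.2))
    (hql : LipschitzWith Kq q)
    {t t' : ℝ} (h0t : 0 ≤ t) (htt' : t ≤ t') (ht'T : t' ≤ T)
    (x₀ x₀' : EuclideanSpace ℝ (Fin n)) (u₀ u₀' : EuclideanSpace ℝ (Fin m)) :
    Qfun f r q M T x₀ u₀ t ≤ Qfun f r q M T x₀' u₀' t' +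
      (Cr + ((Kr : ℝ) * T + (Kq : ℝ)) * ((1 + Cf + (Kf : ℝ) * T) * Real.exp ((Kf : ℝ) * T))
        + (Kr : ℝ) * T)
      * (‖x₀ - x₀'‖ + ‖u₀ - u₀'‖ + (t' - t)) := by
  have htT : t ≤ T := htt'.trans ht'T
  have h0t' : 0 ≤ t' := h0t.trans htt'
  have h0T : 0 ≤ T := h0t'.trans ht'T
  have hCf0 : 0 ≤ Cf := le_trans (norm_nonneg _) (hfb 0 0)
  have hCr0 : 0 ≤ Cr := (abs_nonneg _).trans (hrb 0 0)
  rw [Qfun_eq_sInf, Qfun_eq_sInf]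
  apply sInf_le_sInf_add (QSet_bddBelow hrb hqb h0t htT)
    (QSet_nonempty hfb hfl h0t' ht'T x₀' u₀')
  rintro c ⟨x, u, hu, hx, hxt, hut, rfl⟩
  set v : ℝ → EuclideanSpace ℝ (Fin m) := fun s => u (max s t') + (u₀ - u₀') with hvdef
  have hvAdm : Adm M T v := by
    rw [show Adm M T v = LipschitzOnWith (Real.toNNReal M) v (Set.Icc 0 T) from rfl,
      lipschitzOnWith_iff_dist_le_mul]
    intro a ha b hb
    have hma : max a t' ∈ Set.Icc (0:ℝ) T := ⟨h0t'.trans (le_max_right _ _), max_le ha.2 ht'T⟩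
    have hmb : max b t' ∈ Set.Icc (0:ℝ) T := ⟨h0t'.trans (le_max_right _ _), max_le hb.2 ht'T⟩
    have h1 := (lipschitzOnWith_iff_dist_le_mul.1 hu) (max a t') hma (max b t') hmb
    have h2 : dist (v a) (v b) = dist (u (max a t')) (u (max b t')) := by
      simp only [hvdef, dist_add_right]
    rw [h2]
    refine h1.trans (mul_le_mul_of_nonneg_left ?_ (Real.toNNReal M).coe_nonneg)
    rw [Real.dist_eq, Real.dist_eq]
    exact abs_max_sub_max_le_abs a b t'
  have hvt : v t = u₀ := by
    simp only [hvdef, max_eq_right htt', hut]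
    abel
  have hclose : ∀ s ∈ Set.Icc t' T, dist (v s) (u s) ≤ ‖u₀ - u₀'‖ := by
    intro s hs
    simp only [hvdef, max_eq_left hs.1]
    rw [dist_eq_norm, add_sub_cancel_left]
  obtain ⟨y, hy, hy0, hcost⟩ := gen_compare hfb hrb hfl hrl hql h0t htt' ht'T hu hx hvAdm
    (norm_nonneg _) hclose x₀
  refine ⟨cost r q t T y v, ⟨y, v, hvAdm, hy, hy0, hvt, rfl⟩, ?_⟩
  refine hcost.trans ?_
  rw [add_le_add_iff_left]
  have hxt' : dist x₀ (x t') = ‖x₀ - x₀'‖ := by rw [hxt, dist_eq_norm]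
  rw [hxt']
  set a := ‖x₀ - x₀'‖
  set b := ‖u₀ - u₀'‖
  have ha0 : 0 ≤ a := norm_nonneg _
  have hb0 : 0 ≤ b := norm_nonneg _
  have hc0 : 0 ≤ t' - t := sub_nonneg.2 htt'
  set d := a + b + (t' - t) with hddef
  have had : a ≤ d := by simp only [hddef]; linarith
  have hbd : b ≤ d := by simp only [hddef]; linarith
  have hcd : t' - t ≤ d := by simp only [hddef]; linarith
  have hd0 : 0 ≤ d := by simp only [hddef]; linarith
  have base : a + Cf * (t' - t) + (Kf : ℝ) * b * T ≤ (1 + Cf + (Kf : ℝ) * T) * d := by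
    have b1 : Cf * (t' - t) ≤ Cf * d := mul_le_mul_of_nonneg_left hcd hCf0
    have b2 : (Kf : ℝ) * b * T ≤ (Kf : ℝ) * T * d := by
      have : (Kf : ℝ) * b * T = ((Kf : ℝ) * T) * b := by ring
      rw [this]
      exact mul_le_mul_of_nonneg_left hbd (by positivity)
    have hexp : (1 + Cf + (Kf : ℝ) * T) * d = d + Cf * d + (Kf : ℝ) * T * d := by ring
    linarith
  have hE := Real.exp_pos ((Kf : ℝ) * T)
  have h1 : (a + Cf * (t' - t) + (Kf : ℝ) * b * T) * Real.exp ((Kf : ℝ) * T)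
      ≤ ((1 + Cf + (Kf : ℝ) * T) * d) * Real.exp ((Kf : ℝ) * T) :=
    mul_le_mul_of_nonneg_right base hE.le
  have hK0 : (0:ℝ) ≤ (Kr : ℝ) * T + (Kq : ℝ) := by positivity
  have h3 := mul_le_mul_of_nonneg_left h1 hK0
  have b0 : Cr * (t' - t) ≤ Cr * d := mul_le_mul_of_nonneg_left hcd hCr0
  have b3 : (Kr : ℝ) * T * b ≤ (Kr : ℝ) * T * d := mul_le_mul_of_nonneg_left hbd (by positivity)
  have hre : ((Kr : ℝ) * T + (Kq : ℝ)) * (((1 + Cf + (Kf : ℝ) * T) * d) * Real.exp ((Kf : ℝ) * T))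
      = ((Kr : ℝ) * T + (Kq : ℝ)) * ((1 + Cf + (Kf : ℝ) * T) * Real.exp ((Kf : ℝ) * T)) * d := by
    ring
  have htgt : (Cr + ((Kr : ℝ) * T + (Kq : ℝ)) * ((1 + Cf + (Kf : ℝ) * T)
        * Real.exp ((Kf : ℝ) * T)) + (Kr : ℝ) * T) * d
      = Cr * d + ((Kr : ℝ) * T + (Kq : ℝ)) * ((1 + Cf + (Kf : ℝ) * T)
        * Real.exp ((Kf : ℝ) * T)) * d + (Kr : ℝ) * T * d := by ring
  rw [hre] at h3
  linarith

lemma Q_shift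
    (hfb : ∀ y v, ‖f y v‖ ≤ Cf) (hrb : ∀ y v, |r y v| ≤ Cr) (hqb : ∀ y, |q y| ≤ Cq)
    (hfl : LipschitzWith Kf (fun p : EuclideanSpace ℝ (Fin n) × EuclideanSpace ℝ (Fin m) => f p.1 p.2))
    (hrl : LipschitzWith Kr (fun p : EuclideanSpace ℝ (Fin n) × EuclideanSpace ℝ (Fin m) => r p.1 p.2))
    (hql : LipschitzWith Kq q)
    {t t' : ℝ} (h0t : 0 ≤ t) (htt' : t ≤ t') (ht'T : t' ≤ T)
    (x₀ : EuclideanSpace ℝ (Fin n)) (u₀ : EuclideanSpace ℝ (Fin m)) :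
    Qfun f r q M T x₀ u₀ t' ≤ Qfun f r q M T x₀ u₀ t + (Cr + (Kq : ℝ) * Cf) * (t' - t) := by
  have htT : t ≤ T := htt'.trans ht'T
  have h0t' : 0 ≤ t' := h0t.trans htt'
  rw [Qfun_eq_sInf, Qfun_eq_sInf]
  apply sInf_le_sInf_add (QSet_bddBelow hrb hqb h0t' ht'T)
    (QSet_nonempty hfb hfl h0t htT x₀ u₀)
  rintro c ⟨x, u, hu, hx, hxt, hut, rfl⟩
  obtain ⟨y, w, hw, hy, hyt, hwt, hcost⟩ :=
    shift_compare hfb hrb hfl hrl hql h0t htt' ht'T hu hx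
  exact ⟨cost r q t' T y w, ⟨y, w, hw, hy, by rw [hyt, hxt], by rw [hwt, hut], rfl⟩, hcost⟩
lemma Q_abs_le
    (hfb : ∀ y v, ‖f y v‖ ≤ Cf) (hrb : ∀ y v, |r y v| ≤ Cr) (hqb : ∀ y, |q y| ≤ Cq)
    (hfl : LipschitzWith Kf (fun p : EuclideanSpace ℝ (Fin n) × EuclideanSpace ℝ (Fin m) => f p.1 p.2))
    (hrl : LipschitzWith Kr (fun p : EuclideanSpace ℝ (Fin n) × EuclideanSpace ℝ (Fin m) => r p.1 p.2))
    (hql : LipschitzWith Kq q)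
    {x₀ x₀' : EuclideanSpace ℝ (Fin n)} {u₀ u₀' : EuclideanSpace ℝ (Fin m)}
    {t t' : ℝ} (h0t : 0 ≤ t) (htt' : t ≤ t') (ht'T : t' ≤ T) :
    |Qfun f r q M T x₀ u₀ t - Qfun f r q M T x₀' u₀' t'| ≤
      ((Cr + ((Kr : ℝ) * T + (Kq : ℝ)) * ((1 + Cf + (Kf : ℝ) * T) * Real.exp ((Kf : ℝ) * T))
        + (Kr : ℝ) * T) + (Cr + (Kq : ℝ) * Cf))
      * (‖x₀ - x₀'‖ + ‖u₀ - u₀'‖ + |t - t'|) := by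
  have htT : t ≤ T := htt'.trans ht'T
  have h0t' : 0 ≤ t' := h0t.trans htt'
  have h0T : 0 ≤ T := h0t'.trans ht'T
  have hCf0 : 0 ≤ Cf := le_trans (norm_nonneg _) (hfb 0 0)
  have hCr0 : 0 ≤ Cr := (abs_nonneg _).trans (hrb 0 0)
  set L₁ := Cr + ((Kr : ℝ) * T + (Kq : ℝ)) * ((1 + Cf + (Kf : ℝ) * T)
    * Real.exp ((Kf : ℝ) * T)) + (Kr : ℝ) * T with hL₁def
  set C₂ := Cr + (Kq : ℝ) * Cf with hC₂def
  have hone : (0:ℝ) ≤ 1 + Cf + (Kf : ℝ) * T := by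
    have := mul_nonneg Kf.coe_nonneg h0T
    linarith
  have hL₁0 : 0 ≤ L₁ := by
    rw [hL₁def]
    have h1 : (0:ℝ) ≤ ((Kr : ℝ) * T + (Kq : ℝ)) := by positivity
    have h2 := mul_nonneg hone (Real.exp_pos ((Kf : ℝ) * T)).le
    have h3 := mul_nonneg h1 h2
    have h4 : (0:ℝ) ≤ (Kr : ℝ) * T := by positivity
    linarith
  have hC₂0 : 0 ≤ C₂ := by
    rw [hC₂def]
    have := mul_nonneg Kq.coe_nonneg hCf0
    linarith
  set a := ‖x₀ - x₀'‖
  set b := ‖u₀ - u₀'‖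
  have ha0 : 0 ≤ a := norm_nonneg _
  have hb0 : 0 ≤ b := norm_nonneg _
  have hc0 : 0 ≤ t' - t := sub_nonneg.2 htt'
  have habs : |t - t'| = t' - t := by
    rw [abs_sub_comm, abs_of_nonneg hc0]
  rw [habs, abs_sub_le_iff]
  constructor
  · have h1 := Q_le_Q (M := M) hfb hrb hqb hfl hrl hql h0t htt' ht'T x₀ x₀' u₀ u₀'
    rw [← hL₁def] at h1
    have k2 : 0 ≤ C₂ * (a + b + (t' - t)) := mul_nonneg hC₂0 (by linarith)
    have hexp : (L₁ + C₂) * (a + b + (t' - t))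
        = L₁ * (a + b + (t' - t)) + C₂ * (a + b + (t' - t)) := by ring
    linarith
  · have h2 := Q_le_Q (M := M) hfb hrb hqb hfl hrl hql h0t' le_rfl ht'T x₀' x₀ u₀' u₀
    rw [← hL₁def] at h2
    have h3 := Q_shift (M := M) hfb hrb hqb hfl hrl hql h0t htt' ht'T x₀ u₀
    rw [← hC₂def] at h3
    have hn1 : ‖x₀' - x₀‖ = a := norm_sub_rev _ _
    have hn2 : ‖u₀' - u₀‖ = b := norm_sub_rev _ _
    rw [hn1, hn2, sub_self] at h2
    have k1 : L₁ * (a + b + 0) ≤ L₁ * (a + b + (t' - t)) :=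
      mul_le_mul_of_nonneg_left (by linarith) hL₁0
    have k2 : C₂ * (t' - t) ≤ C₂ * (a + b + (t' - t)) :=
      mul_le_mul_of_nonneg_left (by linarith) hC₂0
    have hexp : (L₁ + C₂) * (a + b + (t' - t))
        = L₁ * (a + b + (t' - t)) + C₂ * (a + b + (t' - t)) := by ring
    linarith

end Aux



/-- **Lipschitz continuity of the Q-function** under (A1) and (A2): there is a constant `L`
such that `|Q(x,u,t) − Q(x',u',t')| ≤ L (|x − x'| + |u − u'| + |t − t'|)` on
`ℝⁿ × ℝᵐ × [0, T]`. -/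
theorem Qfun_lipschitz {n m : ℕ}
    (f : EuclideanSpace ℝ (Fin n) → EuclideanSpace ℝ (Fin m) → EuclideanSpace ℝ (Fin n))
    (r : EuclideanSpace ℝ (Fin n) → EuclideanSpace ℝ (Fin m) → ℝ)
    (q : EuclideanSpace ℝ (Fin n) → ℝ) (M T : ℝ) (hM : 0 < M) (hT : 0 < T)
    (Cf Cr Cq : ℝ)
    (hfb : ∀ x u, ‖f x u‖ ≤ Cf) (hrb : ∀ x u, |r x u| ≤ Cr) (hqb : ∀ x, |q x| ≤ Cq)
    (Kf Kr Kq : NNReal)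
    (hfl : LipschitzWith Kf (fun p : EuclideanSpace ℝ (Fin n) × EuclideanSpace ℝ (Fin m) => f p.1 p.2))
    (hrl : LipschitzWith Kr (fun p : EuclideanSpace ℝ (Fin n) × EuclideanSpace ℝ (Fin m) => r p.1 p.2))
    (hql : LipschitzWith Kq q) :
    ∃ L : ℝ, ∀ (x x' : EuclideanSpace ℝ (Fin n)) (u u' : EuclideanSpace ℝ (Fin m)) (t t' : ℝ),
      t ∈ Set.Icc 0 T → t' ∈ Set.Icc 0 T →
      |Qfun f r q M T x u t - Qfun f r q M T x' u' t'| ≤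
        L * (‖x - x'‖ + ‖u - u'‖ + |t - t'|) := by
  refine ⟨(Cr + ((Kr : ℝ) * T + (Kq : ℝ)) * ((1 + Cf + (Kf : ℝ) * T) * Real.exp ((Kf : ℝ) * T))
      + (Kr : ℝ) * T) + (Cr + (Kq : ℝ) * Cf), ?_⟩
  intro x x' u u' t t' ht ht'
  rcases le_total t t' with h | h
  · exact Q_abs_le (M := M) hfb hrb hqb hfl hrl hql ht.1 h ht'.2
  · have h2 := Q_abs_le (M := M) hfb hrb hqb hfl hrl hql ht'.1 h ht.2
      (x₀ := x') (x₀' := x) (u₀ := u') (u₀' := u)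
    rw [abs_sub_comm, norm_sub_rev x' x, norm_sub_rev u' u, abs_sub_comm t' t] at h2
    exact h2

end
end

section
/- Let Q : ℝ^n × ℝ^m → ℝ be continuously differentiable and satisfy the infinite-horizon HJB equation γQ(x, u) − r(x, u) − ∇_x Q(x, u) · f(x, u) + M|∇_u Q(x, u)| = 0 for all (x, u). Let (x(·), u(·)) be a trajectory with ẋ(t) = f(x(t), u(t)), u̇(t) = −M ∇_u Q(x(t), u(t)) / |∇_u Q(x(t), u(t))| (with ∇_u Q ≠ 0 along the trajectory), x(0) = x, u(0) = u. Then for every t ≥ 0, Q(x, u) = ∫_0^t e^{−γs} r(x(s), u(s)) ds + e^{−γt} Q(x(t), u(t)). -/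
open RealInnerProductSpace

noncomputable section

/-- Bridge between the gradient and the Fréchet derivative. -/
lemma inner_gradient_eq_fderiv {F : Type*} [NormedAddCommGroup F] [InnerProductSpace ℝ F]
    [CompleteSpace F] (g : F → ℝ) (x v : F) : ⟪gradient g x, v⟫ = fderiv ℝ g x v := by
  simp [gradient, ← InnerProductSpace.toDual_apply_apply]

/-- **Integral Bellman equation along the optimal flow (infinite horizon)**: if `Q` is `C¹`
and satisfies the HJB equation `γQ − r − ∇ₓQ · f + M|∇ᵤQ| = 0`, and `(x(·), u(·))` is a
trajectory with `ẋ = f(x, u)`, `u̇ = −M ∇ᵤQ/|∇ᵤQ|` (with `∇ᵤQ ≠ 0` along the trajectory),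
`x(0) = x₀`, `u(0) = u₀`, then for every `t ≥ 0`,
`Q(x₀, u₀) = ∫_0^t e^{−γs} r(x(s), u(s)) ds + e^{−γt} Q(x(t), u(t))`. -/
theorem Q_integral_identity_along_optimal_flow {n m : ℕ}
    (f : EuclideanSpace ℝ (Fin n) → EuclideanSpace ℝ (Fin m) → EuclideanSpace ℝ (Fin n))
    (r : EuclideanSpace ℝ (Fin n) → EuclideanSpace ℝ (Fin m) → ℝ)
    (γ M : ℝ) (hγ : 0 < γ) (hM : 0 < M)
    (Cf Cr : ℝ) (hfb : ∀ x u, ‖f x u‖ ≤ Cf) (hrb : ∀ x u, |r x u| ≤ Cr)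
    (Kf Kr : NNReal)
    (hfl : LipschitzWith Kf (fun p : EuclideanSpace ℝ (Fin n) × EuclideanSpace ℝ (Fin m) => f p.1 p.2))
    (hrl : LipschitzWith Kr (fun p : EuclideanSpace ℝ (Fin n) × EuclideanSpace ℝ (Fin m) => r p.1 p.2))
    (Q : EuclideanSpace ℝ (Fin n) → EuclideanSpace ℝ (Fin m) → ℝ)
    (hQC1 : ContDiff ℝ 1 (fun z : EuclideanSpace ℝ (Fin n) × EuclideanSpace ℝ (Fin m) => Q z.1 z.2))
    (hHJB : ∀ x u, γ * Q x u - r x u - ⟪gradient (fun y => Q y u) x, f x u⟫ +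
      M * ‖gradient (fun w => Q x w) u‖ = 0)
    (xs : ℝ → EuclideanSpace ℝ (Fin n)) (us : ℝ → EuclideanSpace ℝ (Fin m))
    (hx : ∀ t, HasDerivAt xs (f (xs t) (us t)) t)
    (hgrad : ∀ t, gradient (fun w => Q (xs t) w) (us t) ≠ 0)
    (hu : ∀ t, HasDerivAt us
      (-(M / ‖gradient (fun w => Q (xs t) w) (us t)‖) •
        gradient (fun w => Q (xs t) w) (us t)) t)
    (x₀ : EuclideanSpace ℝ (Fin n)) (u₀ : EuclideanSpace ℝ (Fin m))
    (hx₀ : xs 0 = x₀) (hu₀ : us 0 = u₀) :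
    ∀ t : ℝ, 0 ≤ t →
      Q x₀ u₀ = (∫ s in (0:ℝ)..t, Real.exp (-γ * s) * r (xs s) (us s)) +
        Real.exp (-γ * t) * Q (xs t) (us t) := by
  intro t _
  set Qp : EuclideanSpace ℝ (Fin n) × EuclideanSpace ℝ (Fin m) → ℝ :=
    fun z => Q z.1 z.2 with hQpdef
  have hQdiff : Differentiable ℝ Qp := hQC1.differentiable one_ne_zero
  -- derivative of the value along the trajectory
  have hF : ∀ s, HasDerivAt (fun τ => Q (xs τ) (us τ))
      (γ * Q (xs s) (us s) - r (xs s) (us s)) s := by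
    intro s
    set gu := gradient (fun w => Q (xs s) w) (us s) with hgu
    have hz : HasDerivAt (fun τ => (xs τ, us τ))
        (f (xs s) (us s), -(M / ‖gu‖) • gu) s := (hx s).prodMk (hu s)
    have h1 := ((hQdiff (xs s, us s)).hasFDerivAt).comp_hasDerivAt s hz
    have hval : (fderiv ℝ Qp (xs s, us s)) (f (xs s) (us s), -(M / ‖gu‖) • gu)
        = γ * Q (xs s) (us s) - r (xs s) (us s) := by
      set L := fderiv ℝ Qp (xs s, us s) with hL
      have hx' : HasFDerivAt (fun y => Q y (us s))
          (L.comp (ContinuousLinearMap.inl ℝ _ _)) (xs s) := by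
        have := ((hQdiff (xs s, us s)).hasFDerivAt).comp (xs s)
          (hasFDerivAt_prodMk_left (𝕜 := ℝ) (xs s) (us s))
        exact this
      have hu' : HasFDerivAt (fun w => Q (xs s) w)
          (L.comp (ContinuousLinearMap.inr ℝ _ _)) (us s) :=
        ((hQdiff (xs s, us s)).hasFDerivAt).comp (us s)
          (hasFDerivAt_prodMk_right (xs s) (us s))
      have hsplit : L (f (xs s) (us s), -(M / ‖gu‖) • gu)
          = L (f (xs s) (us s), 0) + L (0, -(M / ‖gu‖) • gu) := by
        rw [← map_add]; norm_num
      have e1 : L (f (xs s) (us s), 0)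
          = ⟪gradient (fun y => Q y (us s)) (xs s), f (xs s) (us s)⟫ := by
        rw [inner_gradient_eq_fderiv, hx'.fderiv]; rfl
      have e2 : L (0, -(M / ‖gu‖) • gu) = ⟪gu, -(M / ‖gu‖) • gu⟫ := by
        rw [hgu, inner_gradient_eq_fderiv, hu'.fderiv]; rfl
      have hgun : ‖gu‖ ≠ 0 := norm_ne_zero_iff.2 (hgrad s)
      have e3 : ⟪gu, -(M / ‖gu‖) • gu⟫ = -(M * ‖gu‖) := by
        rw [real_inner_smul_right, real_inner_self_eq_norm_sq]
        field_simp
      have hHJ := hHJB (xs s) (us s)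
      rw [hsplit, e1, e2, e3]
      rw [← hgu] at hHJ
      linarith
    rw [hval] at h1
    exact h1
  -- continuity of the integrand
  have hxc : Continuous xs := continuous_iff_continuousAt.2 fun s => (hx s).continuousAt
  have huc : Continuous us := continuous_iff_continuousAt.2 fun s => (hu s).continuousAt
  have hφc : Continuous (fun s => Real.exp (-γ * s) * r (xs s) (us s)) := by
    apply Continuous.mul
    · exact Real.continuous_exp.comp (continuous_const.mul continuous_id)
    · exact hrl.continuous.comp (hxc.prodMk huc)
  -- the candidate constant function
  set Φ : ℝ → ℝ := fun τ => (∫ s in (0:ℝ)..τ, Real.exp (-γ * s) * r (xs s) (us s)) +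
      Real.exp (-γ * τ) * Q (xs τ) (us τ) with hΦdef
  have hΦ' : ∀ s, HasDerivAt Φ 0 s := by
    intro s
    have hInt : HasDerivAt (fun τ => ∫ σ in (0:ℝ)..τ, Real.exp (-γ * σ) * r (xs σ) (us σ))
        (Real.exp (-γ * s) * r (xs s) (us s)) s :=
      intervalIntegral.integral_hasDerivAt_right (hφc.intervalIntegrable 0 s)
        (hφc.stronglyMeasurableAtFilter _ _) hφc.continuousAt
    have hexp : HasDerivAt (fun τ => Real.exp (-γ * τ)) (Real.exp (-γ * s) * (-γ)) s := by
      have h0 : HasDerivAt (fun τ : ℝ => -γ * τ) (-γ) s := by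
        simpa using (hasDerivAt_id s).const_mul (-γ)
      exact (Real.hasDerivAt_exp (-γ * s)).comp s h0
    have hprod := hexp.mul (hF s)
    have := hInt.add hprod
    have hcalc : Real.exp (-γ * s) * r (xs s) (us s) +
        (Real.exp (-γ * s) * (-γ) * Q (xs s) (us s) +
          Real.exp (-γ * s) * (γ * Q (xs s) (us s) - r (xs s) (us s))) = 0 := by ring
    rw [hcalc] at this
    exact this
  have hconst : Φ t = Φ 0 :=
    is_const_of_deriv_eq_zero (fun s => (hΦ' s).differentiableAt)
      (fun s => (hΦ' s).deriv) t 0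
  have hΦ0 : Φ 0 = Q x₀ u₀ := by
    simp [hΦdef, hx₀, hu₀]
  rw [← hΦ0, ← hconst]
end
end
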